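/- arXiv:1905.13152 — 5 statements merged into one kernel-verified Lean document; each statement's English description precedes it below -/
import Mathlib

section
/- Let λ_1,…,λ_d∈ℂ∖{0} be one-resonant of index (1,…,1), i.e. λ^m=λ_j for m∈ℕ^d and j∈{1,…,d} if and only if m=(q,…,q)+e_j for some q∈ℕ. Then the following are equivalent: (1) for every j∈{1,…,d}, Σ_{m≥1}2^{−m}log(1/ω_j(2^m))<∞, where ω_j(r):=min({|λ^α−λ_i| : 2≤|α|≤r, α_j=0, 1≤i≤d, i≠j}∪{1}); (2) for every j∈{1,…,d}, the set M_j:={α∈ℕ^d : α_j=0} is a Brjuno set for (λ_1,…,λ_d); (3) for every q∈ℕ, the set A_q:={β∈ℕ^d : |β|>qd+1, min{β_1,…,β_d}=q} is a Brjuno set for (λ_1,…,λ_d). -/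
open Complex Metric Set Filter Topology Asymptotics

noncomputable section

/-- The product `π(z) = z^1 ⋯ z^d`. -/
def pprod {d : ℕ} (z : Fin d → ℂ) : ℂ := ∏ j, z j

/-- The normal form `F_N(z) = Λz·(1 − π(z)^k/(kd))`. -/
def FN {d : ℕ} (lam : Fin d → ℂ) (k : ℕ) (z : Fin d → ℂ) : Fin d → ℂ :=
  fun j => lam j * z j * (1 - pprod z ^ k / ((k : ℂ) * (d : ℂ)))

/-- One-resonance of index `(1,…,1)`: `λ^m = λ_j` iff `m = (q,…,q) + e_j`. -/
def OneResonant {d : ℕ} (lam : Fin d → ℂ) : Prop :=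
  ∀ (m : Fin d → ℕ) (j : Fin d),
    (∏ i, lam i ^ m i) = lam j ↔ ∃ q : ℕ, ∀ i, m i = q + if i = j then 1 else 0

/-- `F` is of the form (*): `F(z) = F_N(z) + O(‖z‖^l)` as `z → 0`. -/
def FormStar {d : ℕ} (lam : Fin d → ℂ) (k l : ℕ) (F : (Fin d → ℂ) → (Fin d → ℂ)) : Prop :=
  (fun z => F z - FN lam k z) =O[𝓝 (0 : Fin d → ℂ)] fun z => ‖z‖ ^ l

/-- The attracting sector `S_h(R,θ)`; the argument condition `|arg u − 2πh/k| < θ`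
is expressed mod `2π` by rotating `u` by `e^{-2πih/k}`. -/
def Ssector (k h : ℕ) (R θ : ℝ) : Set ℂ :=
  {u | ‖u ^ k - 1 / (2 * R)‖ < 1 / (2 * R) ∧
    |Complex.arg (u * Complex.exp ((-(2 * Real.pi * (h : ℝ) / (k : ℝ)) : ℝ) * Complex.I))| < θ}

/-- `W(β) = {z : |z^j| < |π(z)|^β for all j}`. -/
def Wset (d : ℕ) (β : ℝ) : Set (Fin d → ℂ) :=
  {z | ∀ j, ‖z j‖ < ‖pprod z‖ ^ β}

/-- The local basin `B_h(R,θ,β)`. -/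
def Bset (d k h : ℕ) (R θ β : ℝ) : Set (Fin d → ℂ) :=
  {z | z ∈ Wset d β ∧ pprod z ∈ Ssector k h R θ}

/-- The local basin hypothesis for the constants `(R₀, θ₀, β₀)`. -/
def LocalBasinHyp (d k l : ℕ) (F : (Fin d → ℂ) → (Fin d → ℂ)) (R0 θ0 β0 : ℝ) : Prop :=
  0 < R0 ∧ θ0 ∈ Ioo 0 (Real.pi / (2 * (k : ℝ))) ∧ β0 ∈ Ioo 0 (1 / (d : ℝ)) ∧
    (2 * (k : ℝ) + 1) < β0 * ((l : ℝ) + (d : ℝ) - 1) ∧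
    ∀ h : ℕ, h < k →
      MapsTo F (Bset d k h R0 θ0 β0) (Bset d k h R0 θ0 β0) ∧
      TendstoUniformlyOn (fun n z => F^[n] z) (fun _ => 0) atTop (Bset d k h R0 θ0 β0)

/-- The global basin `Ω_h = ⋃ₙ F^{-n}(B_h)`. -/
def GlobalBasin (d k : ℕ) (F : (Fin d → ℂ) → (Fin d → ℂ)) (h : ℕ) (R0 θ0 β0 : ℝ) :
    Set (Fin d → ℂ) :=
  ⋃ n : ℕ, F^[n] ⁻¹' Bset d k h R0 θ0 β0

/-- `|α| = α₁ + ⋯ + α_d` for a multi-index `α`. -/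
def degree {d : ℕ} (α : Fin d → ℕ) : ℕ := ∑ i, α i

/-- `λ^α = λ₁^{α₁} ⋯ λ_d^{α_d}`. -/
def lampow {d : ℕ} (lam : Fin d → ℂ) (α : Fin d → ℕ) : ℂ := ∏ i, lam i ^ α i

/-- The minimal divisor function `ω_A(r)`. -/
def omegaA {d : ℕ} (lam : Fin d → ℂ) (A : Set (Fin d → ℕ)) (r : ℕ) : ℝ :=
  sInf ({x | ∃ α ∈ A, 2 ≤ degree α ∧ degree α ≤ r ∧
    ∃ i, x = ‖lampow lam α - lam i‖} ∪ {1})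

/-- `A ⊆ ℕ^d` is a Brjuno set for `(λ₁,…,λ_d)`:
`Σ_{m ≥ 1} 2^{-m} log(1/ω_A(2^m)) < ∞`. -/
def BrjunoSet {d : ℕ} (lam : Fin d → ℂ) (A : Set (Fin d → ℕ)) : Prop :=
  Summable fun m : ℕ => (2 : ℝ)⁻¹ ^ (m + 1) * Real.log (1 / omegaA lam A (2 ^ (m + 1)))

/-- The subset Brjuno condition: each `M_j = {α : α_j = 0}` is a Brjuno set. -/
def SubsetBrjuno {d : ℕ} (lam : Fin d → ℂ) : Prop :=
  ∀ j : Fin d, BrjunoSet lam {α | α j = 0}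

/-- A holomorphic automorphism of `ℂ^d`. -/
def IsAutomorphism {d : ℕ} (F : (Fin d → ℂ) → (Fin d → ℂ)) : Prop :=
  Differentiable ℂ F ∧ ∃ Finv : (Fin d → ℂ) → (Fin d → ℂ),
    Differentiable ℂ Finv ∧ Function.LeftInverse Finv F ∧ Function.RightInverse Finv F

/-- `U` is biholomorphic to `V` (as domains in `ℂ^d`). -/
def BiholoTo {d : ℕ} (U V : Set (Fin d → ℂ)) : Prop :=
  ∃ φ ψ : (Fin d → ℂ) → (Fin d → ℂ),
    DifferentiableOn ℂ φ U ∧ DifferentiableOn ℂ ψ V ∧ MapsTo φ U V ∧ MapsTo ψ V U ∧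
    (∀ z ∈ U, ψ (φ z) = z) ∧ (∀ w ∈ V, φ (ψ w) = w)

/-- The model domain `ℂ^{d-m} × (ℂ*)^m ⊆ ℂ^d`: the last `m` coordinates are nonzero. -/
def CCStarTarget (d m : ℕ) : Set (Fin d → ℂ) := {w | ∀ j : Fin d, d - m ≤ (j : ℕ) → w j ≠ 0}

/-- The Fatou set of `F`: points with a neighborhood on which every subsequence of the
iterates admits a further subsequence converging locally uniformly. -/
def FatouSet {d : ℕ} (F : (Fin d → ℂ) → (Fin d → ℂ)) : Set (Fin d → ℂ) :=
  {z | ∃ U ∈ 𝓝 z, ∀ φ : ℕ → ℕ, StrictMono φ →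
    ∃ ψ : ℕ → ℕ, StrictMono ψ ∧ ∃ g : (Fin d → ℂ) → (Fin d → ℂ),
      TendstoLocallyUniformlyOn (fun m z => F^[φ (ψ m)] z) g atTop U}

/-- `S` is a Fatou component of `F`: a connected component of the Fatou set. -/
def IsFatouComponent {d : ℕ} (F : (Fin d → ℂ) → (Fin d → ℂ)) (S : Set (Fin d → ℂ)) : Prop :=
  ∃ z ∈ FatouSet F, S = connectedComponentIn (FatouSet F) z

/-- `G` admits `N` disjoint `p`-periodic cycles of non-recurrent attracting Fatou
components, each biholomorphic to `T`, all attracted to the origin. -/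
def FatouCycles {d : ℕ} (G : (Fin d → ℂ) → (Fin d → ℂ)) (N p : ℕ) (T : Set (Fin d → ℂ)) :
    Prop :=
  G 0 = 0 ∧ ∃ V : Fin N → Set (Fin d → ℂ),
    (∀ (i : Fin N) (q : ℕ), q < p → IsFatouComponent G (G^[q] '' V i)) ∧
    (∀ i : Fin N, G^[p] '' V i = V i) ∧
    (∀ (i : Fin N) (q : ℕ), 0 < q → q < p → G^[q] '' V i ≠ V i) ∧
    (∀ (i i' : Fin N) (q q' : ℕ), q < p → q' < p → (i ≠ i' ∨ q ≠ q') →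
      Disjoint (G^[q] '' V i) (G^[q'] '' V i')) ∧
    (∀ (i : Fin N) (q : ℕ), q < p → BiholoTo (G^[q] '' V i) T) ∧
    (∀ (i : Fin N) (q : ℕ), q < p → (0 : Fin d → ℂ) ∈ frontier (G^[q] '' V i)) ∧
    (∀ (i : Fin N) (q : ℕ), q < p →
      TendstoLocallyUniformlyOn (fun n z => G^[n] z) (fun _ => 0) atTop (G^[q] '' V i))

/-- The sector at infinity `H(R,θ) = {U : Re U > R, |arg U| < kθ}`. -/
def Hsector (k : ℕ) (R θ : ℝ) : Set ℂ := {U | R < U.re ∧ |Complex.arg U| < (k : ℝ) * θ}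

/-- The tube `T(R,θ,β)` in the coordinates `(U, z²,…,z^d)`. -/
def Tset (d k : ℕ) [NeZero d] (R θ β : ℝ) : Set (Fin d → ℂ) :=
  {w | w 0 ∈ Hsector k R θ ∧
    ‖w 0‖ ^ ((β - 1) / (k : ℝ)) <
      ‖∏ j ∈ Finset.univ.erase (0 : Fin d), w j‖ ∧
    ∀ j : Fin d, j ≠ 0 → ‖w j‖ < ‖w 0‖ ^ (-β / (k : ℝ))}

/-- The Euclidean (ℓ²) norm on `ℂ^d`. -/
def l2norm {d : ℕ} (w : Fin d → ℂ) : ℝ := Real.sqrt (∑ j, ‖w j‖ ^ 2)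

/-- The minimal divisor function `ω_j(r)` omitting the `j`-th variable and the `j`-th
eigenvalue. -/
def omegaJ {d : ℕ} (lam : Fin d → ℂ) (j : Fin d) (r : ℕ) : ℝ :=
  sInf ({x | ∃ α : Fin d → ℕ, 2 ≤ degree α ∧ degree α ≤ r ∧ α j = 0 ∧
    ∃ i : Fin d, i ≠ j ∧ x = ‖lampow lam α - lam i‖} ∪ {1})

namespace Stmt5Aux

lemma summable_two_inv_pow : Summable fun m : ℕ => (2:ℝ)⁻¹ ^ (m+1) :=
  ((summable_geometric_of_lt_one (by norm_num) (by norm_num : (2:ℝ)⁻¹ < 1)).mul_left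
    (2:ℝ)⁻¹).congr (fun m => (pow_succ' _ _).symm)

lemma summable_aux {f g : ℕ → ℝ} (C : ℝ) (s : ℕ) (hg0 : ∀ m, 0 ≤ g m)
    (hf0 : ∀ m, 0 ≤ f m) (hle : ∀ m, f m ≤ C + g (m + s))
    (hg : Summable fun m => (2:ℝ)⁻¹ ^ (m+1) * g m) :
    Summable fun m => (2:ℝ)⁻¹ ^ (m+1) * f m := by
  have h1 : Summable fun m : ℕ => (2:ℝ)⁻¹ ^ (m+1) * C := summable_two_inv_pow.mul_right C
  have h2 : Summable fun m : ℕ => (2:ℝ)^s * ((2:ℝ)⁻¹ ^ (m+s+1) * g (m+s)) :=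
    (((summable_nat_add_iff s).2 hg).mul_left _)
  refine Summable.of_nonneg_of_le (fun m => mul_nonneg (by positivity) (hf0 m))
    (fun m => ?_) (h1.add h2)
  have hpow : (2:ℝ)⁻¹ ^ (m+1) = (2:ℝ)^s * (2:ℝ)⁻¹ ^ (m+s+1) := by
    have h3 : (2:ℝ)⁻¹ ^ (m+s+1) = 2⁻¹^(m+1) * 2⁻¹^s := by rw [← pow_add]; congr 1; omega
    rw [h3, ← mul_assoc, mul_comm ((2:ℝ)^s), mul_assoc, ← mul_pow]
    norm_num
  calc (2:ℝ)⁻¹ ^ (m+1) * f m ≤ (2:ℝ)⁻¹ ^ (m+1) * (C + g (m+s)) := by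
        apply mul_le_mul_of_nonneg_left (hle m) (by positivity)
    _ = (2:ℝ)⁻¹ ^ (m+1) * C + (2:ℝ)^s * ((2:ℝ)⁻¹ ^ (m+s+1) * g (m+s)) := by
        rw [mul_add]; rw [hpow]; ring

lemma log_inv_nonneg {w : ℝ} (h0 : 0 < w) (h1 : w ≤ 1) : 0 ≤ Real.log (1/w) :=
  Real.log_nonneg (one_le_one_div h0 h1)

lemma log_inv_le {c w w' : ℝ} (hc : 0 < c) (hw' : 0 < w') (hw : 0 < w) (h : c * w' ≤ w) :
    Real.log (1/w) ≤ Real.log (1/c) + Real.log (1/w') := by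
  have h1 : Real.log (1/w) ≤ Real.log (1/(c*w')) := by
    apply Real.log_le_log (by positivity)
    exact one_div_le_one_div_of_le (by positivity) h
  have h2 : Real.log (1/(c*w')) = Real.log (1/c) + Real.log (1/w') := by
    rw [show (1:ℝ)/(c*w') = (1/c) * (1/w') by rw [one_div, mul_inv, one_div, one_div]]
    exact Real.log_mul (by positivity) (by positivity)
  linarith

variable {d : ℕ} (lam : Fin d → ℂ)

/-- The set of small divisors for a pair predicate `P`. -/
def Sset (P : (Fin d → ℕ) → Fin d → Prop) (r : ℕ) : Set ℝ :=
  {x | ∃ α i, P α i ∧ 2 ≤ degree α ∧ degree α ≤ r ∧ x = ‖lampow lam α - lam i‖}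

def omegaP (P : (Fin d → ℕ) → Fin d → Prop) (r : ℕ) : ℝ := sInf (Sset lam P r ∪ {1})

lemma Sset_finite (P : (Fin d → ℕ) → Fin d → Prop) (r : ℕ) : (Sset lam P r ∪ {1}).Finite := by
  apply Set.Finite.union ?_ (Set.finite_singleton 1)
  have h1 : {α : Fin d → ℕ | ∀ i, α i ≤ r}.Finite := by
    have : {α : Fin d → ℕ | ∀ i, α i ≤ r} = Set.pi Set.univ (fun _ => Set.Iic r) := by
      ext α; simp [Set.mem_pi]; rfl
    rw [this]; exact Set.Finite.pi (fun _ => Set.finite_Iic r)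
  have h2 : Sset lam P r ⊆ (fun p : (Fin d → ℕ) × Fin d =>
      ‖lampow lam p.1 - lam p.2‖) '' ({α | ∀ i, α i ≤ r} ×ˢ Set.univ) := by
    rintro x ⟨α, i, _, _, hr, hx⟩
    exact ⟨(α, i), ⟨fun l => le_trans (Finset.single_le_sum (f := α) (fun _ _ => Nat.zero_le _)
      (Finset.mem_univ l)) hr, trivial⟩, hx.symm⟩
  exact Set.Finite.subset ((h1.prod (Set.finite_univ)).image _) h2

lemma Sset_bddBelow (P : (Fin d → ℕ) → Fin d → Prop) (r : ℕ) :
    ∀ x ∈ Sset lam P r ∪ {1}, (0:ℝ) ≤ x := by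
  rintro x (⟨α, i, _, _, _, hx⟩ | hx)
  · rw [hx]; positivity
  · simp at hx; rw [hx]; norm_num

lemma omegaP_le_one (P : (Fin d → ℕ) → Fin d → Prop) (r : ℕ) : omegaP lam P r ≤ 1 :=
  csInf_le ⟨0, Sset_bddBelow lam P r⟩ (Set.mem_union_right _ rfl)

lemma omegaP_le {P : (Fin d → ℕ) → Fin d → Prop} {r : ℕ} {α : Fin d → ℕ} {i : Fin d}
    (hP : P α i) (h2 : 2 ≤ degree α) (hr : degree α ≤ r) :
    omegaP lam P r ≤ ‖lampow lam α - lam i‖ :=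
  csInf_le ⟨0, Sset_bddBelow lam P r⟩ (Set.mem_union_left _ ⟨α, i, hP, h2, hr, rfl⟩)

lemma omegaP_pos {P : (Fin d → ℕ) → Fin d → Prop} {r : ℕ}
    (h : ∀ α i, P α i → 2 ≤ degree α → lampow lam α ≠ lam i) : 0 < omegaP lam P r := by
  have hne : (Sset lam P r ∪ {1} : Set ℝ).Nonempty := ⟨1, Or.inr rfl⟩
  have hmem : omegaP lam P r ∈ Sset lam P r ∪ {1} := hne.csInf_mem (Sset_finite lam P r)
  rcases hmem with ⟨α, i, hP, h2, _, hx⟩ | hx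
  · rw [hx]
    have := sub_ne_zero_of_ne (h α i hP h2)
    simpa [norm_pos_iff] using this
  · simp at hx; rw [hx]; norm_num

lemma omegaP_compare {c : ℝ} (hc0 : 0 < c) (hc1 : c ≤ 1)
    {P P' : (Fin d → ℕ) → Fin d → Prop} {r r' : ℕ}
    (h : ∀ α i, P α i → 2 ≤ degree α → degree α ≤ r →
      ∃ α' i', P' α' i' ∧ 2 ≤ degree α' ∧ degree α' ≤ r' ∧
        c * ‖lampow lam α' - lam i'‖ ≤ ‖lampow lam α - lam i‖) :
    c * omegaP lam P' r' ≤ omegaP lam P r := by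
  have hne : (Sset lam P r ∪ {1} : Set ℝ).Nonempty := ⟨1, Or.inr rfl⟩
  conv_rhs => rw [omegaP]
  apply le_csInf hne
  rintro x (⟨α, i, hP, h2, hr, hx⟩ | hx)
  · obtain ⟨α', i', hP', h2', hr', hle⟩ := h α i hP h2 hr
    rw [hx]
    refine le_trans ?_ hle
    exact mul_le_mul_of_nonneg_left (omegaP_le lam hP' h2' hr') hc0.le
  · simp at hx; rw [hx]
    calc c * omegaP lam P' r' ≤ c * 1 :=
          mul_le_mul_of_nonneg_left (omegaP_le_one lam P' r') hc0.le
      _ ≤ 1 := by linarith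

lemma omegaP_mono {P : (Fin d → ℕ) → Fin d → Prop} {r r' : ℕ} (h : r ≤ r') :
    omegaP lam P r' ≤ omegaP lam P r := by
  have := omegaP_compare lam (c := 1) one_pos le_rfl (P := P) (P' := P) (r := r) (r' := r')
    (fun α i hP h2 hr => ⟨α, i, hP, h2, hr.trans h, by rw [one_mul]⟩)
  linarith

lemma omegaA_eq (A : Set (Fin d → ℕ)) (r : ℕ) :
    omegaA lam A r = omegaP lam (fun α _ => α ∈ A) r := by
  unfold omegaA omegaP Sset
  congr 1
  ext x
  constructor
  · rintro (⟨α, hA, h2, hr, i, hx⟩ | h)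
    · exact Or.inl ⟨α, i, hA, h2, hr, hx⟩
    · exact Or.inr h
  · rintro (⟨α, i, hA, h2, hr, hx⟩ | h)
    · exact Or.inl ⟨α, hA, h2, hr, i, hx⟩
    · exact Or.inr h

lemma omegaJ_eq (j : Fin d) (r : ℕ) :
    omegaJ lam j r = omegaP lam (fun α i => α j = 0 ∧ i ≠ j) r := by
  unfold omegaJ omegaP Sset
  congr 1
  ext x
  constructor
  · rintro (⟨α, h2, hr, hj, i, hi, hx⟩ | h)
    · exact Or.inl ⟨α, i, ⟨hj, hi⟩, h2, hr, hx⟩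
    · exact Or.inr h
  · rintro (⟨α, i, ⟨hj, hi⟩, h2, hr, hx⟩ | h)
    · exact Or.inl ⟨α, h2, hr, hj, i, hi, hx⟩
    · exact Or.inr h

/-- Normalized summability statement for a pair predicate. -/
def SP (P : (Fin d → ℕ) → Fin d → Prop) : Prop :=
  Summable fun m : ℕ => (2:ℝ)⁻¹ ^ (m+1) * Real.log (1 / omegaP lam P (2^(m+1)))

lemma brjuno_iff (A : Set (Fin d → ℕ)) :
    BrjunoSet lam A ↔ SP lam (fun α _ => α ∈ A) := by
  unfold BrjunoSet SP
  simp only [omegaA_eq]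

/-- Transfer of summability along an omega comparison. -/
lemma SP_of_compare {P P' : (Fin d → ℕ) → Fin d → Prop} {c : ℝ} (hc0 : 0 < c) (hc1 : c ≤ 1)
    (s : ℕ) (hpos : ∀ r, 0 < omegaP lam P r) (hpos' : ∀ r, 0 < omegaP lam P' r)
    (hcomp : ∀ m : ℕ, c * omegaP lam P' (2^(m+s+1)) ≤ omegaP lam P (2^(m+1)))
    (h' : SP lam P') : SP lam P := by
  unfold SP at h' ⊢
  apply summable_aux (f := fun m => Real.log (1 / omegaP lam P (2^(m+1))))
    (g := fun m => Real.log (1 / omegaP lam P' (2^(m+1)))) (Real.log (1/c)) s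
  · exact fun m => log_inv_nonneg (hpos' _) (omegaP_le_one lam _ _)
  · exact fun m => log_inv_nonneg (hpos _) (omegaP_le_one lam _ _)
  · exact fun m => log_inv_le hc0 (hpos' _) (hpos _) (hcomp m)
  · exact h'

def PJ (j : Fin d) : (Fin d → ℕ) → Fin d → Prop := fun α i => α j = 0 ∧ i ≠ j
def PM (j : Fin d) : (Fin d → ℕ) → Fin d → Prop := fun α _ => α j = 0
def PMall : (Fin d → ℕ) → Fin d → Prop := fun α _ => ∃ j, α j = 0
def PA (q : ℕ) : (Fin d → ℕ) → Fin d → Prop :=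
  fun β _ => q * d + 1 < degree β ∧ (∀ i, q ≤ β i) ∧ ∃ i, β i = q

lemma degree_res (q : ℕ) (i : Fin d) :
    degree (fun l => q + if l = i then 1 else 0) = q * d + 1 := by
  unfold degree
  rw [Finset.sum_add_distrib, Finset.sum_const, Finset.sum_ite_eq']
  simp [mul_comm]

section res
variable {lam}
variable (hlam : ∀ i, lam i ≠ 0) (hres : OneResonant lam)
include hres

lemma degree_of_res {α : Fin d → ℕ} {i : Fin d} (h : lampow lam α = lam i) :
    ∃ q : ℕ, (∀ l, α l = q + if l = i then 1 else 0) ∧ degree α = q * d + 1 := by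
  obtain ⟨q, hq⟩ := (hres α i).1 h
  refine ⟨q, hq, ?_⟩
  rw [show α = fun l => q + if l = i then 1 else 0 from funext hq]
  exact degree_res q i

lemma nonres1 {α : Fin d → ℕ} {i : Fin d} (h2 : 2 ≤ degree α) (hz : ∃ j, α j = 0) :
    lampow lam α ≠ lam i := by
  intro h
  obtain ⟨q, hq, hdeg⟩ := degree_of_res hres h
  obtain ⟨j, hj⟩ := hz
  have := hq j
  rw [hj] at this
  have hq0 : q = 0 := by omega
  have hji : j ≠ i := by intro e; rw [e] at this; simp at this
  rw [hq0] at hdeg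
  omega

lemma nonres2 {α : Fin d → ℕ} {i : Fin d} {q : ℕ} (hdeg : q * d + 1 < degree α)
    (hmin : ∃ l, α l = q) : lampow lam α ≠ lam i := by
  intro h
  obtain ⟨q', hq', hd'⟩ := degree_of_res hres h
  obtain ⟨l, hl⟩ := hmin
  have h1 := hq' l
  rw [hl] at h1
  have hle : q' ≤ q := by split_ifs at h1 <;> omega
  have : q' * d ≤ q * d := Nat.mul_le_mul_right d hle
  omega

include hlam

lemma prod_lam_one (hd : 1 ≤ d) : ∏ i, lam i = 1 := by
  have j : Fin d := ⟨0, hd⟩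
  have h := (hres (fun l => 1 + if l = j then 1 else 0) j).2 ⟨1, fun _ => rfl⟩
  have hcalc : (∏ i, lam i ^ (1 + if i = j then 1 else 0)) = (∏ i, lam i) * lam j := by
    simp only [pow_add, Finset.prod_mul_distrib, pow_ite, pow_one, pow_zero]
    rw [Finset.prod_ite_eq']
    simp
  rw [hcalc] at h
  exact mul_right_cancel₀ (hlam j) (by rw [h, one_mul])

lemma lampow_shift {β : Fin d → ℕ} {q : ℕ} (hd : 1 ≤ d) (hβ : ∀ l, q ≤ β l) :
    lampow lam (fun l => β l - q) = lampow lam β := by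
  have h1 : lampow lam β = lampow lam (fun l => β l - q) * (∏ i, lam i) ^ q := by
    unfold lampow
    rw [← Finset.prod_pow, ← Finset.prod_mul_distrib]
    apply Finset.prod_congr rfl
    intro l _
    rw [← pow_add, Nat.sub_add_cancel (hβ l)]
  rw [h1, prod_lam_one hlam hres hd, one_pow, mul_one]

lemma prod_omit_eq_inv (hd : 1 ≤ d) (j : Fin d) :
    (∏ l, lam l ^ (if l = j then 0 else 1)) = (lam j)⁻¹ := by
  have h3 : (∏ l, lam l ^ (if l = j then 1 else 0)) = lam j := by
    simp only [pow_ite, pow_one, pow_zero]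
    rw [Finset.prod_ite_eq']
    simp
  have h2 : (∏ l, lam l ^ (if l = j then 0 else 1)) * lam j = 1 := by
    nth_rewrite 1 [← h3]
    rw [mul_comm, ← Finset.prod_mul_distrib]
    rw [← prod_lam_one hlam hres hd]
    apply Finset.prod_congr rfl
    intro l _
    rw [← pow_add]
    split_ifs <;> simp
  exact eq_inv_of_mul_eq_one_left h2

/-- The key trick: for `α` with `α j = 0` and `it ≠ j` we can trade the divisor
`λ^α - λ_j` for the divisor `λ^{α'} - λ_it` with `α' j = 0`. -/
lemma key_identity (hd : 1 ≤ d) {α : Fin d → ℕ} {j it : Fin d} (hne : it ≠ j) :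
    lampow lam (fun l => α l + ((if l = j then 0 else 1) + if l = it then 1 else 0)) - lam it
      = lam it * (lam j)⁻¹ * (lampow lam α - lam j) := by
  have hb : (∏ l, lam l ^ (if l = it then 1 else 0)) = lam it := by
    simp only [pow_ite, pow_one, pow_zero]
    rw [Finset.prod_ite_eq']
    simp
  have h1 : lampow lam (fun l => α l + ((if l = j then 0 else 1) + if l = it then 1 else 0))
      = lampow lam α * ((lam j)⁻¹ * lam it) := by
    unfold lampow
    simp only [pow_add]
    rw [Finset.prod_mul_distrib, Finset.prod_mul_distrib, prod_omit_eq_inv hlam hres hd, hb]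
  rw [h1]
  have := hlam j
  field_simp

end res

lemma sum_indicator_one (b : Fin d) : (∑ l : Fin d, (if l = b then (1:ℕ) else 0)) = 1 := by
  rw [Finset.sum_ite_eq']
  simp

lemma degree_shift (hd : 1 ≤ d) {α : Fin d → ℕ} {j it : Fin d} (hne : it ≠ j) :
    degree (fun l => α l + ((if l = j then 0 else 1) + if l = it then 1 else 0))
      = degree α + d := by
  have eB : (∑ l : Fin d, (if l = j then (0:ℕ) else 1))
      + (∑ l : Fin d, (if l = j then (1:ℕ) else 0)) = d := by
    rw [← Finset.sum_add_distrib]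
    have h : ∀ l : Fin d, ((if l = j then (0:ℕ) else 1) + (if l = j then 1 else 0)) = 1 :=
      fun l => by split_ifs <;> rfl
    simp only [h, Finset.sum_const, Finset.card_univ, Fintype.card_fin, smul_eq_mul, mul_one]
  have eC := sum_indicator_one j
  unfold degree
  rw [Finset.sum_add_distrib, Finset.sum_add_distrib, sum_indicator_one it]
  omega

lemma degree_sub {α : Fin d → ℕ} {q : ℕ} (hβ : ∀ l, q ≤ α l) :
    degree (fun l => α l - q) + q * d = degree α := by
  have hq : q * d = ∑ _l : Fin d, q := by
    simp [Finset.sum_const, Finset.card_univ, mul_comm]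
  unfold degree
  rw [hq, ← Finset.sum_add_distrib]
  exact Finset.sum_congr rfl (fun l _ => Nat.sub_add_cancel (hβ l))

lemma exists_pos_coord {α : Fin d → ℕ} (h2 : 2 ≤ degree α) : ∃ l, α l ≠ 0 := by
  by_contra h
  push_neg at h
  have : degree α = 0 := by unfold degree; simp [h]
  omega

lemma two_pow_ineq (hd : 1 ≤ d) (m : ℕ) : 2^(m+1) + d ≤ 2^(m+d+1) := by
  have h1 : d + 1 ≤ 2^d := Nat.lt_two_pow_self (n := d)
  have h2 : (2:ℕ)^(m+d+1) = 2^(m+1) * 2^d := by rw [← pow_add]; congr 1; omega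
  have h3 : 1 ≤ (2:ℕ)^(m+1) := Nat.one_le_two_pow
  have h4 : 2^(m+1)*(d+1) ≤ 2^(m+1)*2^d := Nat.mul_le_mul_left _ h1
  nlinarith

lemma omegaP_anti {P P' : (Fin d → ℕ) → Fin d → Prop} {r : ℕ}
    (h : ∀ α i, P α i → 2 ≤ degree α → degree α ≤ r →
      ∃ α' i', P' α' i' ∧ 2 ≤ degree α' ∧ degree α' ≤ r ∧
        ‖lampow lam α' - lam i'‖ ≤ ‖lampow lam α - lam i‖) :
    omegaP lam P' r ≤ omegaP lam P r := by
  have := omegaP_compare lam (c := 1) one_pos le_rfl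
    (fun α i hP h2 hr => by
      obtain ⟨α', i', h1, h2', h3, h4⟩ := h α i hP h2 hr
      exact ⟨α', i', h1, h2', h3, by rw [one_mul]; exact h4⟩)
  linarith

lemma Mall_cases (r : ℕ) :
    omegaP lam PMall r = 1 ∨ ∃ j, omegaP lam (PM j) r ≤ omegaP lam PMall r := by
  have hne : (Sset lam PMall r ∪ {1} : Set ℝ).Nonempty := ⟨1, Or.inr rfl⟩
  have hmem : omegaP lam PMall r ∈ Sset lam PMall r ∪ {1} :=
    hne.csInf_mem (Sset_finite lam PMall r)
  rcases hmem with ⟨α, i, ⟨j, hj⟩, h2, hr, hx⟩ | hx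
  · right; exact ⟨j, by rw [hx]; exact omegaP_le lam hj h2 hr⟩
  · left; exact hx

section comps
variable {lam}
variable (hlam : ∀ i, lam i ≠ 0) (hres : OneResonant lam) (hd : 1 ≤ d)
include hres

lemma posJ (j : Fin d) (r : ℕ) : 0 < omegaP lam (PJ j) r :=
  omegaP_pos lam (fun _ _ h h2 => nonres1 hres h2 ⟨j, h.1⟩)

lemma posM (j : Fin d) (r : ℕ) : 0 < omegaP lam (PM j) r :=
  omegaP_pos lam (fun _ _ h h2 => nonres1 hres h2 ⟨j, h⟩)

lemma posMall (r : ℕ) : 0 < omegaP lam PMall r :=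
  omegaP_pos lam (fun _ _ h h2 => nonres1 hres h2 h)

lemma posA (q r : ℕ) : 0 < omegaP lam (PA q) r :=
  omegaP_pos lam (fun _ _ h _ => nonres2 hres h.1 h.2.2)

omit hres

lemma cmpJM (j : Fin d) (r : ℕ) : omegaP lam (PM j) r ≤ omegaP lam (PJ j) r :=
  omegaP_anti lam (fun α i hP h2 hr => ⟨α, i, hP.1, h2, hr, le_rfl⟩)

lemma cmpMallM (j : Fin d) (r : ℕ) : omegaP lam PMall r ≤ omegaP lam (PM j) r :=
  omegaP_anti lam (fun α i hP h2 hr => ⟨α, i, ⟨j, hP⟩, h2, hr, le_rfl⟩)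

lemma cmpA0Mall (r : ℕ) : omegaP lam (PA 0) r ≤ omegaP lam PMall r :=
  omegaP_anti lam (fun α i hP h2 hr =>
    ⟨α, i, ⟨by omega, fun _ => Nat.zero_le _, hP⟩, h2, hr, le_rfl⟩)

include hlam hres

lemma cmpMallA (q r : ℕ) : omegaP lam PMall r ≤ omegaP lam (PA q) r := by
  apply omegaP_anti lam
  rintro β i ⟨hdeg, hge, l, hl⟩ h2 hr
  have hd1 : 1 ≤ d := i.pos
  have hdsub := degree_sub (α := β) (q := q) hge
  refine ⟨fun s => β s - q, i, ⟨l, by show β l - q = 0; omega⟩, by omega, by omega, ?_⟩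
  rw [lampow_shift hlam hres hd1 hge]

include hd in
lemma cmpMJ (j : Fin d) {c0 : ℝ} (hc0 : 0 < c0) (hc01 : c0 ≤ 1)
    (habs : ∀ a b, c0 * ‖lam a‖ ≤ ‖lam b‖)
    {r r' : ℕ} (hrr : r + d ≤ r') :
    c0 * omegaP lam (PJ j) r' ≤ omegaP lam (PM j) r := by
  apply omegaP_compare lam hc0 hc01
  intro α i hP h2 hr
  by_cases hij : i = j
  · subst hij
    obtain ⟨it, hit⟩ := exists_pos_coord h2
    have hitj : it ≠ i := by rintro rfl; exact hit hP
    refine ⟨fun l => α l + ((if l = i then 0 else 1) + if l = it then 1 else 0), it,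
      ⟨?_, hitj⟩, ?_, ?_, ?_⟩
    · show α i + ((if i = i then 0 else 1) + if i = it then 1 else 0) = 0
      simp [Ne.symm hitj]
      exact hP
    · rw [degree_shift hd hitj]; omega
    · rw [degree_shift hd hitj]; omega
    · have hkey := key_identity hlam hres hd (α := α) (j := i) (it := it) hitj
      have habsj : (0:ℝ) < ‖lam i‖ := norm_pos_iff.2 (hlam i)
      have hXnn : (0:ℝ) ≤ ‖lampow lam α - lam i‖ := norm_nonneg _
      rw [hkey, norm_mul, norm_mul, norm_inv]
      rw [show c0 * (‖lam it‖ * (‖lam i‖)⁻¹ *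
          ‖lampow lam α - lam i‖)
        = c0 * ‖lam it‖ * ‖lampow lam α - lam i‖
          / ‖lam i‖ from by ring, div_le_iff₀ habsj]
      have hmm := mul_le_mul_of_nonneg_right (habs it i) hXnn
      nlinarith
  · exact ⟨α, i, ⟨hP, hij⟩, h2, le_trans hr (by omega),
      by nlinarith [norm_nonneg (lampow lam α - lam i)]⟩

end comps

end Stmt5Aux

open Stmt5Aux in
/-- For one-resonant `(λ₁,…,λ_d)` of index `(1,…,1)`, the Brjuno condition
on subsets, the partial Brjuno condition, and the Brjuno-set condition on the sets `A_q`
are all equivalent. -/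
theorem stmt5 (d : ℕ) (hd : 1 ≤ d) (lam : Fin d → ℂ) (hlam : ∀ i, lam i ≠ 0)
    (hres : OneResonant lam) :
    ((∀ j : Fin d, Summable fun m : ℕ =>
        (2 : ℝ)⁻¹ ^ (m + 1) * Real.log (1 / omegaJ lam j (2 ^ (m + 1)))) ↔
      (∀ j : Fin d, BrjunoSet lam {α | α j = 0})) ∧
    ((∀ j : Fin d, BrjunoSet lam {α | α j = 0}) ↔
      (∀ q : ℕ, BrjunoSet lam
        {β : Fin d → ℕ | q * d + 1 < degree β ∧ (∀ i, q ≤ β i) ∧ ∃ i, β i = q})) := by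
  classical
  have hSPJ : ∀ j : Fin d, (Summable fun m : ℕ =>
      (2:ℝ)⁻¹ ^ (m+1) * Real.log (1 / omegaJ lam j (2^(m+1)))) ↔ SP lam (PJ j) := by
    intro j
    unfold SP
    simp only [omegaJ_eq]
    exact Iff.rfl
  have hSPM : ∀ j : Fin d, BrjunoSet lam {α | α j = 0} ↔ SP lam (PM j) := fun j =>
    (brjuno_iff lam _).trans Iff.rfl
  have hSPA : ∀ q : ℕ, BrjunoSet lam
      {β : Fin d → ℕ | q * d + 1 < degree β ∧ (∀ i, q ≤ β i) ∧ ∃ i, β i = q}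
        ↔ SP lam (PA q) := fun q => (brjuno_iff lam _).trans Iff.rfl
  -- the constant c0
  have hFne : (Finset.univ : Finset (Fin d)).Nonempty := ⟨⟨0, hd⟩, Finset.mem_univ _⟩
  set mabs := Finset.univ.inf' hFne (fun i => ‖lam i‖) with hm_def
  set Mabs := Finset.univ.sup' hFne (fun i => ‖lam i‖) with hM_def
  have hm_pos : 0 < mabs := by
    rw [hm_def, Finset.lt_inf'_iff]
    exact fun i _ => norm_pos_iff.2 (hlam i)
  have hmM : ∀ a, mabs ≤ ‖lam a‖ := fun a =>
    Finset.inf'_le (fun i => ‖lam i‖) (Finset.mem_univ a)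
  have hMa : ∀ a, ‖lam a‖ ≤ Mabs := fun a =>
    Finset.le_sup' (fun i => ‖lam i‖) (Finset.mem_univ a)
  have hM_pos : 0 < Mabs := lt_of_lt_of_le hm_pos ((hmM ⟨0, hd⟩).trans (hMa ⟨0, hd⟩))
  set c0 := mabs / Mabs with hc0_def
  have hc0 : 0 < c0 := div_pos hm_pos hM_pos
  have hc01 : c0 ≤ 1 := by
    rw [hc0_def, div_le_one hM_pos]
    exact (hmM ⟨0, hd⟩).trans (hMa ⟨0, hd⟩)
  have habs : ∀ a b, c0 * ‖lam a‖ ≤ ‖lam b‖ := fun a b =>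
    calc c0 * ‖lam a‖ ≤ c0 * Mabs :=
          mul_le_mul_of_nonneg_left (hMa a) hc0.le
      _ = mabs := by rw [hc0_def, div_mul_cancel₀ _ hM_pos.ne']
      _ ≤ ‖lam b‖ := hmM b
  -- SP transfer lemmas
  have hSPM_of_J : ∀ j, SP lam (PJ j) → SP lam (PM j) := fun j hJ =>
    SP_of_compare lam hc0 hc01 d (posM hres j) (posJ hres j)
      (fun m => cmpMJ hlam hres hd j hc0 hc01 habs (two_pow_ineq hd m)) hJ
  have hSPJ_of_M : ∀ j, SP lam (PM j) → SP lam (PJ j) := fun j hM =>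
    SP_of_compare lam one_pos le_rfl 0 (posJ hres j) (posM hres j)
      (fun m => by simpa using cmpJM j (2^(m+1))) hM
  have hSPMall_of_M : (∀ j, SP lam (PM j)) → SP lam PMall := by
    intro h
    unfold SP at h ⊢
    apply summable_aux (f := fun m => Real.log (1/omegaP lam PMall (2^(m+1))))
      (g := fun m => ∑ j : Fin d, Real.log (1/omegaP lam (PM j) (2^(m+1)))) 0 0
    · intro m
      exact Finset.sum_nonneg fun j _ =>
        log_inv_nonneg (posM hres j _) (omegaP_le_one lam _ _)
    · intro m; exact log_inv_nonneg (posMall hres _) (omegaP_le_one lam _ _)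
    · intro m
      simp only [add_zero, zero_add]
      rcases Mall_cases lam (2^(m+1)) with h1 | ⟨j, hle⟩
      · rw [h1]
        simp only [div_one, Real.log_one]
        exact Finset.sum_nonneg fun j _ =>
          log_inv_nonneg (posM hres j _) (omegaP_le_one lam _ _)
      · calc Real.log (1/omegaP lam PMall (2^(m+1)))
            ≤ Real.log (1/omegaP lam (PM j) (2^(m+1))) := by
              have := log_inv_le (c := 1) one_pos (posM hres j _) (posMall hres _)
                (by rw [one_mul]; exact hle)
              simpa using this
          _ ≤ ∑ j' : Fin d, Real.log (1/omegaP lam (PM j') (2^(m+1))) :=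
              Finset.single_le_sum (fun j' _ =>
                log_inv_nonneg (posM hres j' _) (omegaP_le_one lam _ _)) (Finset.mem_univ j)
    · exact (summable_sum (fun j _ => h j)).congr (fun m => (Finset.mul_sum _ _ _).symm)
  constructor
  · constructor
    · intro h j
      exact (hSPM j).2 (hSPM_of_J j ((hSPJ j).1 (h j)))
    · intro h j
      exact (hSPJ j).2 (hSPJ_of_M j ((hSPM j).1 (h j)))
  · constructor
    · intro h q
      have hMall : SP lam PMall := hSPMall_of_M (fun j => (hSPM j).1 (h j))
      exact (hSPA q).2 (SP_of_compare lam one_pos le_rfl 0 (posA hres q) (posMall hres)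
        (fun m => by simpa using cmpMallA hlam hres q (2^(m+1))) hMall)
    · intro h j
      have hA0 : SP lam (PA 0) := (hSPA 0).1 (h 0)
      have hMall : SP lam PMall := SP_of_compare lam one_pos le_rfl 0 (posMall hres)
        (posA hres 0) (fun m => by simpa using cmpA0Mall (2^(m+1))) hA0
      exact (hSPM j).2 (SP_of_compare lam one_pos le_rfl 0 (posM hres j) (posMall hres)
        (fun m => by simpa using cmpMallM j (2^(m+1))) hMall)
end
end

section
/- Let F, B_h, ψ, σ_2,…,σ_d and R_1,θ_1,β_1, R_2,θ_2,β_2 be as in the hypotheses (with (ψ,σ_2,…,σ_d) injective on B_h(R_1,θ_1,β_1) and T(R_2,θ_2,β_2)⊆(ψ,σ_2,…,σ_d)(B_h)). For j=2,…,d define τ_j:=ψ^{1/(kd)}·σ_j on B_h (principal branch root, well-defined since Re ψ>0). Then each τ_j maps B_h to ℂ∖{0} and satisfies τ_j(F(z))=λ_j·τ_j(z) for all z∈B_h. Moreover the map (ψ,τ_2,…,τ_d) is injective on B_h(R_1,θ_1,β_1), and its image contains the set {(U,w^2,…,w^d)∈ℂ×ℂ^{d−1} : U∈H(R_2,θ_2),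 |U|^{(β_2−1/d)/k}<|w^2⋯w^d|, and |w^j|<|U|^{(1/d−β_2)/k} for j=2,…,d}, where H(R,θ):={U∈ℂ : Re U>R, |arg U|<kθ}. -/
open Complex Metric Set Filter Topology Asymptotics

noncomputable section

/-- For `a, b` with positive real parts, `(a/b)^c * b^c = a^c`. -/
lemma cpow_div_mul_aux {a b : ℂ} (ha : 0 < a.re) (hb : 0 < b.re) (c : ℂ) :
    (a / b) ^ c * b ^ c = a ^ c := by
  have ha0 : a ≠ 0 := fun h => by simp [h] at ha
  have hb0 : b ≠ 0 := fun h => by simp [h] at hb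
  have harga : |a.arg| < Real.pi / 2 := Complex.abs_arg_lt_pi_div_two_iff.2 (Or.inl ha)
  have hargb : |b.arg| < Real.pi / 2 := Complex.abs_arg_lt_pi_div_two_iff.2 (Or.inl hb)
  have hpi : (0 : ℝ) < Real.pi := Real.pi_pos
  have hbπ : b.arg ≠ Real.pi := by
    intro h; rw [h, abs_of_pos hpi] at hargb; linarith
  have hargbinv : (b⁻¹).arg = -b.arg := by rw [Complex.arg_inv, if_neg hbπ]
  have harg : a.arg + (b⁻¹).arg ∈ Set.Ioc (-Real.pi) Real.pi := by
    rw [hargbinv, Set.mem_Ioc]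
    obtain ⟨h1, h2⟩ := abs_lt.1 harga
    obtain ⟨h3, h4⟩ := abs_lt.1 hargb
    constructor <;> linarith
  have hlog : Complex.log (a / b) = Complex.log a - Complex.log b := by
    rw [div_eq_mul_inv, Complex.log_mul ha0 (inv_ne_zero hb0) harg, Complex.log_inv b hbπ,
      sub_eq_add_neg]
  rw [Complex.cpow_def_of_ne_zero (div_ne_zero ha0 hb0) c, Complex.cpow_def_of_ne_zero hb0 c,
    Complex.cpow_def_of_ne_zero ha0 c, ← Complex.exp_add, hlog]
  congr 1; ring

/-- Monotonicity of the local basins in the parameters. -/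
lemma Bset_subset_aux {d k h : ℕ} [NeZero d] (hk : 1 ≤ k) {R0 θ0 β0 R1 θ1 β1 : ℝ}
    (hR0 : 0 < R0) (hR01 : R0 < R1) (hR1 : 1 < R1) (hθ : θ1 ≤ θ0)
    (hβ0 : 0 < β0) (hβ : β0 ≤ β1) :
    Bset d k h R1 θ1 β1 ⊆ Bset d k h R0 θ0 β0 := by
  rintro z ⟨hW, hS1, hS2⟩
  have hR1' : 0 < R1 := lt_trans hR0 hR01
  have hβ1 : 0 < β1 := lt_of_lt_of_le hβ0 hβ
  have hπ0 : pprod z ≠ 0 := by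
    intro h0
    have h1 := hW 0
    rw [h0] at h1
    simp [Real.zero_rpow hβ1.ne'] at h1
    exact (norm_nonneg _).not_gt h1
  -- `|π z| < 1`
  have habsR1 : ‖1 / (2 * (R1 : ℂ))‖ = 1 / (2 * R1) := by
    rw [norm_div, norm_one, norm_mul, Complex.norm_two, Complex.norm_real, Real.norm_eq_abs, abs_of_pos hR1']
  have hk1 : ‖pprod z‖ ^ k < 1 / R1 := by
    have h1 := norm_add_le (pprod z ^ k - 1 / (2 * (R1 : ℂ))) (1 / (2 * (R1 : ℂ)))
    have h2 : pprod z ^ k - 1 / (2 * (R1 : ℂ)) + 1 / (2 * (R1 : ℂ)) = pprod z ^ k := by ring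
    rw [h2, norm_pow, habsR1] at h1
    have h3 : 1 / (2 * R1) + 1 / (2 * R1) = 1 / R1 := by ring
    linarith [hS1]
  have hlt1 : ‖pprod z‖ < 1 := by
    have h4 : 1 / R1 < 1 := by rw [div_lt_one hR1']; exact hR1
    have h5 : ‖pprod z‖ ^ k < 1 := lt_trans hk1 h4
    by_contra hcon
    push_neg at hcon
    exact absurd h5 (not_lt.2 (one_le_pow₀ hcon))
  -- sector for `R0`
  have hS0 : ‖pprod z ^ k - 1 / (2 * (R0 : ℂ))‖ < 1 / (2 * R0) := by
    have h3 : (1 / (2 * (R1 : ℂ)) - 1 / (2 * (R0 : ℂ))) =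
        (((1 / (2 * R1) - 1 / (2 * R0)) : ℝ) : ℂ) := by push_cast; ring
    have h5 : 1 / (2 * R1) ≤ 1 / (2 * R0) := by
      apply one_div_le_one_div_of_le (by linarith) (by linarith)
    have h4 : ‖1 / (2 * (R1 : ℂ)) - 1 / (2 * (R0 : ℂ))‖ =
        1 / (2 * R0) - 1 / (2 * R1) := by
      rw [h3, Complex.norm_real, Real.norm_eq_abs, abs_of_nonpos (by linarith), neg_sub]
    have htri := norm_add_le (pprod z ^ k - 1 / (2 * (R1 : ℂ)))
      (1 / (2 * (R1 : ℂ)) - 1 / (2 * (R0 : ℂ)))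
    have heq : pprod z ^ k - 1 / (2 * (R1 : ℂ)) + (1 / (2 * (R1 : ℂ)) - 1 / (2 * (R0 : ℂ)))
        = pprod z ^ k - 1 / (2 * (R0 : ℂ)) := by ring
    rw [heq, h4] at htri
    linarith [hS1]
  refine ⟨fun j => ?_, hS0, lt_of_lt_of_le hS2 hθ⟩
  calc ‖z j‖ < ‖pprod z‖ ^ β1 := hW j
    _ ≤ ‖pprod z‖ ^ β0 :=
      Real.rpow_le_rpow_of_exponent_ge (norm_pos_iff.mpr hπ0) (le_of_lt hlt1) hβ

/-- The maps `τ_j = ψ^{1/(kd)}·σ_j` are nonvanishing on `B_h`, satisfy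
`τ_j∘F = λ_j·τ_j`, the map `(ψ, τ₂,…,τ_d)` is injective on `B_h(R₁,θ₁,β₁)`, and its image
contains the stated tube. -/
theorem stmt13 (d k l : ℕ) [NeZero d] (hd : 2 ≤ d) (hk : 1 ≤ k) (hl : 2 * k * d + 1 < l)
    (lam : Fin d → ℂ) (hmod : ∀ j, ‖lam j‖ = 1) (hres : OneResonant lam)
    (F : (Fin d → ℂ) → (Fin d → ℂ)) (hF0 : F 0 = 0)
    (hgerm : ∃ r : ℝ, 0 < r ∧ DifferentiableOn ℂ F (Metric.ball 0 r) ∧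
      Set.InjOn F (Metric.ball 0 r))
    (hform : FormStar lam k l F)
    (R0 θ0 β0 : ℝ) (hbasin : LocalBasinHyp d k l F R0 θ0 β0)
    (h : ℕ) (hh : h < k)
    (ψ : (Fin d → ℂ) → ℂ)
    (hψdiff : DifferentiableOn ℂ ψ (Bset d k h R0 θ0 β0))
    (hψre : ∀ z ∈ Bset d k h R0 θ0 β0, 0 < (ψ z).re)
    (hψF : ∀ z ∈ Bset d k h R0 θ0 β0, ψ (F z) = ψ z + 1)
    (c : ℂ) (Cψ : ℝ)
    (hψasym : ∀ z ∈ Bset d k h R0 θ0 β0,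
      ‖ψ z - ((pprod z ^ k)⁻¹ + c * Complex.log ((pprod z ^ k)⁻¹))‖ ≤
        Cψ / ‖(pprod z ^ k)⁻¹‖)
    (σ : Fin d → (Fin d → ℂ) → ℂ)
    (hσdiff : ∀ j : Fin d, j ≠ 0 → DifferentiableOn ℂ (σ j) (Bset d k h R0 θ0 β0))
    (hσne : ∀ j : Fin d, j ≠ 0 → ∀ z ∈ Bset d k h R0 θ0 β0, σ j z ≠ 0)
    (hσF : ∀ j : Fin d, j ≠ 0 → ∀ z ∈ Bset d k h R0 θ0 β0,
      σ j (F z) = lam j * σ j z * (ψ z / (ψ z + 1)) ^ ((1 : ℂ) / ((k : ℂ) * (d : ℂ))))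
    (hσasym : ∀ j : Fin d, j ≠ 0 → ∀ a : ℝ, 1 - β0 < a → a < k → ∃ C : ℝ,
      ∀ z ∈ Bset d k h R0 θ0 β0, ‖σ j z - z j‖ ≤ C * ‖pprod z‖ ^ a)
    (R1 θ1 β1 : ℝ) (hR1 : max R0 1 < R1) (hθ1 : θ1 ∈ Ioo 0 θ0)
    (hβ1 : β1 ∈ Ioo β0 (1 / (d : ℝ)))
    (hinjφ : Set.InjOn (fun z => (fun j : Fin d => if j = 0 then ψ z else σ j z))
      (Bset d k h R1 θ1 β1))
    (R2 θ2 β2 : ℝ) (hR2 : 0 < R2) (hθ2 : θ2 ∈ Ioo 0 (Real.pi / (2 * (k : ℝ))))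
    (hβ2 : β2 ∈ Ioo 0 (1 / (d : ℝ)))
    (hT : Tset d k R2 θ2 β2 ⊆
      (fun z => (fun j : Fin d => if j = 0 then ψ z else σ j z)) '' Bset d k h R0 θ0 β0) :
    (∀ j : Fin d, j ≠ 0 → ∀ z ∈ Bset d k h R0 θ0 β0,
      ψ z ^ ((1 : ℂ) / ((k : ℂ) * (d : ℂ))) * σ j z ≠ 0) ∧
    (∀ j : Fin d, j ≠ 0 → ∀ z ∈ Bset d k h R0 θ0 β0,
      ψ (F z) ^ ((1 : ℂ) / ((k : ℂ) * (d : ℂ))) * σ j (F z) =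
        lam j * (ψ z ^ ((1 : ℂ) / ((k : ℂ) * (d : ℂ))) * σ j z)) ∧
    Set.InjOn (fun z => (fun j : Fin d => if j = 0 then ψ z
        else ψ z ^ ((1 : ℂ) / ((k : ℂ) * (d : ℂ))) * σ j z))
      (Bset d k h R1 θ1 β1) ∧
    {w : Fin d → ℂ | w 0 ∈ Hsector k R2 θ2 ∧
        ‖w 0‖ ^ ((β2 - 1 / (d : ℝ)) / (k : ℝ)) <
          ‖∏ j ∈ Finset.univ.erase (0 : Fin d), w j‖ ∧
        ∀ j : Fin d, j ≠ 0 →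
          ‖w j‖ < ‖w 0‖ ^ ((1 / (d : ℝ) - β2) / (k : ℝ))} ⊆
      (fun z => (fun j : Fin d => if j = 0 then ψ z
        else ψ z ^ ((1 : ℂ) / ((k : ℂ) * (d : ℂ))) * σ j z)) '' Bset d k h R0 θ0 β0 := by
  set cc : ℂ := (1 : ℂ) / ((k : ℂ) * (d : ℂ)) with hccdef
  have hk0 : (k : ℝ) ≠ 0 := by positivity
  have hd0 : (d : ℝ) ≠ 0 := by
    have : 0 < d := lt_of_lt_of_le (by norm_num) hd
    positivity
  have hψne : ∀ z ∈ Bset d k h R0 θ0 β0, ψ z ≠ 0 := by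
    intro z hz h0
    have := hψre z hz
    rw [h0] at this; simp at this
  have hψcne : ∀ z ∈ Bset d k h R0 θ0 β0, ψ z ^ cc ≠ 0 := by
    intro z hz
    rw [Complex.cpow_def_of_ne_zero (hψne z hz) cc]
    exact Complex.exp_ne_zero _
  -- part 1
  have part1 : ∀ j : Fin d, j ≠ 0 → ∀ z ∈ Bset d k h R0 θ0 β0, ψ z ^ cc * σ j z ≠ 0 :=
    fun j hj z hz => mul_ne_zero (hψcne z hz) (hσne j hj z hz)
  -- part 2
  have part2 : ∀ j : Fin d, j ≠ 0 → ∀ z ∈ Bset d k h R0 θ0 β0,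
      ψ (F z) ^ cc * σ j (F z) = lam j * (ψ z ^ cc * σ j z) := by
    intro j hj z hz
    rw [hψF z hz, hσF j hj z hz]
    have hb : 0 < (ψ z + 1).re := by
      have := hψre z hz
      simp only [Complex.add_re, Complex.one_re]
      linarith
    have hkey := cpow_div_mul_aux (hψre z hz) hb cc
    linear_combination (lam j * σ j z) * hkey
  -- inclusion of basins
  have hsub : Bset d k h R1 θ1 β1 ⊆ Bset d k h R0 θ0 β0 :=
    Bset_subset_aux hk hbasin.1 (lt_of_le_of_lt (le_max_left _ _) hR1)
      (lt_of_le_of_lt (le_max_right _ _) hR1) (le_of_lt hθ1.2)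
      hbasin.2.2.1.1 (le_of_lt hβ1.1)
  -- part 3
  have part3 : Set.InjOn (fun z => (fun j : Fin d => if j = 0 then ψ z
      else ψ z ^ cc * σ j z)) (Bset d k h R1 θ1 β1) := by
    intro z hz z' hz' heq
    simp only at heq
    apply hinjφ hz hz'
    have h0 : ψ z = ψ z' := by
      have := congrFun heq 0
      simpa using this
    funext j
    by_cases hj : j = 0
    · simp [hj, h0]
    · have hje := congrFun heq j
      simp only [if_neg hj] at hje ⊢
      rw [h0] at hje
      exact mul_left_cancel₀ (hψcne z' (hsub hz')) hje
  refine ⟨part1, part2, part3, ?_⟩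
  -- part 4
  intro w hw
  obtain ⟨hU, hprod, hsmall⟩ := hw
  have hU0 : w 0 ≠ 0 := by
    intro h0
    have := hU.1
    rw [h0] at this
    simp at this
    linarith
  have hA : 0 < ‖w 0‖ := norm_pos_iff.mpr hU0
  have hUcne : (w 0) ^ cc ≠ 0 := by
    rw [Complex.cpow_def_of_ne_zero hU0 cc]; exact Complex.exp_ne_zero _
  set e1 : ℝ := 1 / ((k : ℝ) * (d : ℝ)) with he1
  have hccre : cc = ((e1 : ℝ) : ℂ) := by rw [hccdef, he1]; push_cast; ring
  have hUc : ‖(w 0) ^ cc‖ = ‖w 0‖ ^ e1 := by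
    rw [hccre, Complex.norm_cpow_real]
  set A := ‖w 0‖ with hAdef
  -- the preimage tuple
  have hw'mem : (fun j : Fin d => if j = 0 then w 0 else w j / (w 0) ^ cc)
      ∈ Tset d k R2 θ2 β2 := by
    refine ⟨by simpa using hU, ?_, ?_⟩
    · -- product condition
      have hpe : (∏ j ∈ Finset.univ.erase (0 : Fin d),
            (if j = 0 then w 0 else w j / (w 0) ^ cc))
          = (∏ j ∈ Finset.univ.erase (0 : Fin d), w j) / ((w 0) ^ cc) ^ (d - 1) := by
        rw [Finset.prod_congr rfl (fun j hj => if_neg (Finset.mem_erase.1 hj).1),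
          Finset.prod_div_distrib, Finset.prod_const,
          Finset.card_erase_of_mem (Finset.mem_univ _), Finset.card_univ, Fintype.card_fin]
      simp only [reduceIte]
      rw [← hAdef]
      rw [hpe, norm_div, norm_pow, hUc]
      have hcast : ((d - 1 : ℕ) : ℝ) = (d : ℝ) - 1 := by
        rw [Nat.cast_sub (by omega)]; norm_num
      have hApow : (A ^ e1) ^ (d - 1) = A ^ (e1 * ((d : ℝ) - 1)) := by
        rw [← Real.rpow_natCast (A ^ e1) (d - 1), ← Real.rpow_mul (le_of_lt hA), hcast]
      rw [hApow, lt_div_iff₀ (by positivity), ← Real.rpow_add hA]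
      have hexp : (β2 - 1) / (k : ℝ) + e1 * ((d : ℝ) - 1) = (β2 - 1 / (d : ℝ)) / (k : ℝ) := by
        rw [he1]; field_simp; ring
      rw [hexp]
      exact hprod
    · -- coordinate conditions
      intro j hj
      simp only [if_neg hj, reduceIte]
      rw [← hAdef]
      rw [norm_div, hUc]
      have hexp2 : (1 / (d : ℝ) - β2) / (k : ℝ) - e1 = -β2 / (k : ℝ) := by
        rw [he1]; field_simp; ring
      have h2 : A ^ (-β2 / (k : ℝ)) = A ^ ((1 / (d : ℝ) - β2) / (k : ℝ)) / A ^ e1 := by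
        rw [← hexp2, Real.rpow_sub hA]
      rw [h2]
      gcongr
      exact hsmall j hj
  obtain ⟨z, hz, hzeq⟩ := hT hw'mem
  refine ⟨z, hz, ?_⟩
  simp only at hzeq ⊢
  have hψz : ψ z = w 0 := by
    have := congrFun hzeq 0
    simpa using this
  funext j
  by_cases hj : j = 0
  · simp [hj, hψz]
  · have hσz : σ j z = w j / (w 0) ^ cc := by
      have := congrFun hzeq j
      simpa [hj] using this
    simp only [if_neg hj]
    rw [hψz, hσz, mul_comm, div_mul_cancel₀ _ hUcne]
end
end

section
/- Let d≥2, k≥1 be integers, h∈{0,…,k−1}, and let R>0, θ∈(0,π/(2k)), β∈(0,1/d). Then the open set B_h(R,θ,β)⊆ℂ^d is nonempty and homotopy equivalent to the (d−1)-dimensional torus (S^1)^{d−1}. -/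
open Complex Metric Set Filter Topology Asymptotics

noncomputable section

namespace Stmt17Aux

lemma aux_gm {x y bx b2 t : ℝ} (hx : 0 ≤ x) (hy : 0 ≤ y)
    (hbx : 0 < bx) (h1 : x < bx) (h2 : y < b2) (ht0 : 0 ≤ t) (ht1 : t ≤ 1) :
    x ^ (1 - t) * y ^ t < bx ^ (1 - t) * b2 ^ t := by
  rcases eq_or_lt_of_le ht0 with h | h
  · rw [← h]
    simp only [sub_zero, Real.rpow_one, Real.rpow_zero, mul_one]
    exact h1
  · have hy' : y ^ t < b2 ^ t := Real.rpow_lt_rpow hy h2 h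
    have hx' : x ^ (1 - t) ≤ bx ^ (1 - t) := Real.rpow_le_rpow hx h1.le (by linarith)
    calc x ^ (1 - t) * y ^ t ≤ bx ^ (1 - t) * y ^ t :=
          mul_le_mul_of_nonneg_right hx' (Real.rpow_nonneg hy t)
      _ < bx ^ (1 - t) * b2 ^ t :=
          mul_lt_mul_of_pos_left hy' (Real.rpow_pos_of_pos hbx _)

lemma aux_gm_const {x y M t : ℝ} (hx : 0 ≤ x) (hy : 0 ≤ y) (hM : 0 < M)
    (h1 : x < M) (h2 : y < M) (ht0 : 0 ≤ t) (ht1 : t ≤ 1) :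
    x ^ (1 - t) * y ^ t < M := by
  have := aux_gm hx hy hM h1 h2 ht0 ht1
  rwa [← Real.rpow_add hM, sub_add_cancel, Real.rpow_one] at this

lemma rpow_gm (x y s t : ℝ) (hx : 0 ≤ x) (hy : 0 ≤ y) :
    (x ^ (1 - t) * y ^ t) ^ s = (x ^ s) ^ (1 - t) * (y ^ s) ^ t := by
  rw [Real.mul_rpow (Real.rpow_nonneg hx _) (Real.rpow_nonneg hy _),
    ← Real.rpow_mul hx, ← Real.rpow_mul hy, mul_comm (1 - t) s, mul_comm t s,
    Real.rpow_mul hx, Real.rpow_mul hy]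

lemma pow_gm (x y t : ℝ) (k : ℕ) (hx : 0 ≤ x) (hy : 0 ≤ y) :
    (x ^ (1 - t) * y ^ t) ^ k = ((x ^ k : ℝ)) ^ (1 - t) * ((y ^ k : ℝ)) ^ t := by
  rw [← Real.rpow_natCast (x ^ (1 - t) * y ^ t) k, rpow_gm x y (k : ℝ) t hx hy,
    Real.rpow_natCast x k, Real.rpow_natCast y k]

lemma aux_sector {s ψ R : ℝ} (hs : 0 < s) (hR : 0 < R) :
    ‖(s : ℂ) * Complex.exp ((ψ : ℂ) * Complex.I) - 1 / (2 * (R : ℂ))‖ < 1 / (2 * R)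
      ↔ s < Real.cos ψ / R := by
  set c : ℝ := 1 / (2 * R) with hcdef
  have hc : (0 : ℝ) < c := by positivity
  have hRR : 2 * R * c = 1 := by rw [hcdef]; field_simp
  have h1 : (s : ℂ) * Complex.exp ((ψ : ℂ) * Complex.I) - 1 / (2 * (R : ℂ))
      = ((s * Real.cos ψ - c : ℝ) : ℂ) + ((s * Real.sin ψ : ℝ) : ℂ) * Complex.I := by
    rw [Complex.exp_mul_I, ← Complex.ofReal_cos, ← Complex.ofReal_sin, hcdef]
    push_cast
    ring
  rw [h1, Complex.norm_def, Complex.normSq_add_mul_I, Real.sqrt_lt' hc, lt_div_iff₀ hR]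
  have hsin := Real.sin_sq_add_cos_sq ψ
  constructor
  · intro hlt
    have h2 : s * s < 2 * s * c * Real.cos ψ := by nlinarith [hsin]
    have h3 : s < 2 * c * Real.cos ψ := by
      by_contra hcon
      push_neg at hcon
      nlinarith [mul_pos hs hc]
    nlinarith [mul_pos hc hR, mul_pos hs hR]
  · intro hlt
    have h3 : s < 2 * c * Real.cos ψ := by nlinarith [mul_pos hc hR, mul_pos hs hR]
    nlinarith [mul_lt_mul_of_pos_left h3 hs, hsin, sq_nonneg (s * Real.sin ψ)]

lemma aux_arg {ρ ψ : ℝ} (hρ : 0 < ρ) (h1 : -Real.pi < ψ) (h2 : ψ ≤ Real.pi) :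
    Complex.arg ((ρ : ℂ) * Complex.exp ((ψ : ℂ) * Complex.I)) = ψ := by
  rw [Complex.arg_real_mul _ hρ, Complex.exp_mul_I, Complex.arg_cos_add_sin_mul_I ⟨h1, h2⟩]

def argω (ω : ℝ) (u : ℂ) : ℝ :=
  Complex.arg (u * Complex.exp (((-ω : ℝ) : ℂ) * Complex.I))

lemma polar_decomp (ω : ℝ) {u : ℂ} (hu : u ≠ 0) :
    u = ((‖u‖ : ℝ) : ℂ) * Complex.exp (((argω ω u + ω : ℝ) : ℂ) * Complex.I) := by
  have h := Complex.norm_mul_exp_arg_mul_I (u * Complex.exp (((-ω : ℝ) : ℂ) * Complex.I))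
  rw [norm_mul, Complex.norm_exp_ofReal_mul_I, mul_one] at h
  have h2 : u * Complex.exp (((-ω : ℝ) : ℂ) * Complex.I) * Complex.exp ((ω : ℂ) * Complex.I)
      = u := by
    rw [mul_assoc, ← Complex.exp_add]
    push_cast
    ring_nf
    simp
  calc u = u * Complex.exp (((-ω : ℝ) : ℂ) * Complex.I) * Complex.exp ((ω : ℂ) * Complex.I) :=
        h2.symm
    _ = ((‖u‖ : ℝ) : ℂ) * Complex.exp ((Complex.arg (u * Complex.exp (((-ω : ℝ) : ℂ)
          * Complex.I)) : ℂ) * Complex.I) * Complex.exp ((ω : ℂ) * Complex.I) := by rw [h]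
    _ = _ := by
        rw [mul_assoc, ← Complex.exp_add, argω]
        push_cast
        ring_nf

lemma exp_omega_pow (k h : ℕ) (hk : 1 ≤ k) :
    Complex.exp ((((k : ℝ) * (2 * Real.pi * (h : ℝ) / (k : ℝ)) : ℝ) : ℂ) * Complex.I) = 1 := by
  have hk0 : (k : ℝ) ≠ 0 := by positivity
  have h1 : ((k : ℝ) * (2 * Real.pi * (h : ℝ) / (k : ℝ)) : ℝ) = 2 * Real.pi * (h : ℝ) := by
    field_simp
  rw [h1]
  have h2 := Complex.exp_int_mul_two_pi_mul_I (h : ℤ)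
  rw [show ((h : ℤ) : ℂ) * (2 * (Real.pi : ℂ) * Complex.I)
      = ((2 * Real.pi * (h : ℝ) : ℝ) : ℂ) * Complex.I by push_cast; ring] at h2
  exact h2

lemma polar_mem_iff {k h : ℕ} {R θ ρ a : ℝ} (hk : 1 ≤ k) (hR : 0 < R)
    (hθ2 : θ < Real.pi / (2 * k)) (hρ : 0 < ρ) (ha : |a| < θ) :
    ((ρ : ℂ) * Complex.exp (((a + 2 * Real.pi * (h : ℝ) / (k : ℝ) : ℝ) : ℂ) * Complex.I)
        ∈ Ssector k h R θ)
      ↔ (ρ ^ k < Real.cos ((k : ℝ) * a) / R) := by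
  set ω : ℝ := 2 * Real.pi * (h : ℝ) / (k : ℝ) with hω
  have hk0 : (0 : ℝ) < k := by exact_mod_cast hk
  have hθπ : θ < Real.pi / 2 := by
    have hk1 : (1 : ℝ) ≤ (k : ℝ) := by exact_mod_cast hk
    have : Real.pi / (2 * k) ≤ Real.pi / 2 := by
      apply div_le_div_of_nonneg_left Real.pi_pos.le (by norm_num)
      linarith
    linarith
  have haπ : |a| < Real.pi / 2 := ha.trans hθπ
  have hπ2 : Real.pi / 2 < Real.pi := by linarith [Real.pi_pos]
  -- the rotated point
  have hmul : (ρ : ℂ) * Complex.exp (((a + ω : ℝ) : ℂ) * Complex.I) *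
      Complex.exp (((-ω : ℝ) : ℂ) * Complex.I) = (ρ : ℂ) * Complex.exp ((a : ℂ) * Complex.I) := by
    rw [mul_assoc, ← Complex.exp_add]
    push_cast
    ring_nf
  have harg : Complex.arg ((ρ : ℂ) * Complex.exp (((a + ω : ℝ) : ℂ) * Complex.I) *
      Complex.exp (((-ω : ℝ) : ℂ) * Complex.I)) = a := by
    rw [hmul]
    exact aux_arg hρ (by cases abs_lt.mp haπ; linarith) (by cases abs_lt.mp haπ; linarith)
  have hpow : ((ρ : ℂ) * Complex.exp (((a + ω : ℝ) : ℂ) * Complex.I)) ^ k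
      = ((ρ ^ k : ℝ) : ℂ) * Complex.exp ((((k : ℝ) * a : ℝ) : ℂ) * Complex.I) := by
    rw [mul_pow, ← Complex.exp_nat_mul]
    have h2 : (k : ℂ) * ((((a + ω : ℝ)) : ℂ) * Complex.I)
        = (((k : ℝ) * a : ℝ) : ℂ) * Complex.I + (((k : ℝ) * ω : ℝ) : ℂ) * Complex.I := by
      push_cast
      ring
    rw [h2, Complex.exp_add, hω, exp_omega_pow k h hk, mul_one]
    push_cast
    ring
  constructor
  · rintro ⟨hs, -⟩
    rw [hpow] at hs
    exact (aux_sector (pow_pos hρ k) hR).mp hs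
  · intro hs
    refine ⟨?_, ?_⟩
    · rw [hpow]
      exact (aux_sector (pow_pos hρ k) hR).mpr hs
    · show |Complex.arg _| < θ
      rw [show ((-(2 * Real.pi * (h : ℝ) / (k : ℝ)) : ℝ) : ℂ) = ((-ω : ℝ) : ℂ) by rw [hω],
        harg]
      exact ha

lemma mem_ne_zero {n k h : ℕ} {R θ β : ℝ} (hk : 1 ≤ k) (hR : 0 < R) {z : Fin (n + 2) → ℂ}
    (hz : z ∈ Bset (n + 2) k h R θ β) : pprod z ≠ 0 ∧ ∀ j, z j ≠ 0 := by
  have h1 := hz.2.1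
  have hc : (0 : ℝ) < 1 / (2 * R) := by positivity
  have hp : pprod z ≠ 0 := by
    intro h0
    rw [h0, zero_pow (by omega), zero_sub, norm_neg] at h1
    simp only [norm_div, norm_one, Complex.norm_ofNat] at h1
    rw [norm_mul] at h1
    simp only [Complex.norm_ofNat, Complex.norm_real, Real.norm_eq_abs, abs_of_pos hR] at h1
    exact absurd h1 (lt_irrefl _)
  refine ⟨hp, fun j => ?_⟩
  intro h0
  apply hp
  rw [pprod]
  exact Finset.prod_eq_zero (Finset.mem_univ j) h0

/-! ### The maps -/

def hco (r t : ℝ) (z : ℂ) : ℂ :=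
  z / ((‖z‖ : ℝ) : ℂ) * (((‖z‖) ^ (1 - t) * r ^ t : ℝ) : ℂ)

def uT (t0 ω t : ℝ) (u : ℂ) : ℂ :=
  (((‖u‖) ^ (1 - t) * t0 ^ t : ℝ) : ℂ) *
    Complex.exp ((((1 - t) * argω ω u + ω : ℝ) : ℂ) * Complex.I)

def Hfun (n : ℕ) (r t0 ω t : ℝ) (z : Fin (n + 2) → ℂ) : Fin (n + 2) → ℂ :=
  fun j => Fin.cases (uT t0 ω t (pprod z) / ∏ i : Fin (n + 1), hco r t (z i.succ))
    (fun i => hco r t (z i.succ)) j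

def Ffun (n : ℕ) (z : Fin (n + 2) → ℂ) (i : Fin (n + 1)) : ℂ :=
  z i.succ / ((‖z i.succ‖ : ℝ) : ℂ)

def Gfun (n : ℕ) (r : ℝ) (u0 : ℂ) (w : Fin (n + 1) → ℂ) : Fin (n + 2) → ℂ :=
  fun j => Fin.cases (u0 / ((r : ℂ) ^ (n + 1) * ∏ i : Fin (n + 1), w i))
    (fun i => (r : ℂ) * w i) j

lemma abs_hco {r : ℝ} (hr : 0 ≤ r) (t : ℝ) {z : ℂ} (hz : z ≠ 0) :
    ‖hco r t z‖ = ‖z‖ ^ (1 - t) * r ^ t := by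
  have h1 : ‖z‖ ≠ 0 := by simpa using hz
  have h2 : (0 : ℝ) ≤ ‖z‖ ^ (1 - t) * r ^ t :=
    mul_nonneg (Real.rpow_nonneg (norm_nonneg z) _) (Real.rpow_nonneg hr _)
  rw [hco, norm_mul, norm_div, Complex.norm_real, Real.norm_eq_abs, Complex.norm_real, Real.norm_eq_abs,
    _root_.abs_of_nonneg (norm_nonneg z), div_self h1, one_mul, _root_.abs_of_nonneg h2]

lemma hco_ne_zero {r : ℝ} (hr : 0 < r) (t : ℝ) {z : ℂ} (hz : z ≠ 0) : hco r t z ≠ 0 := by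
  have h := abs_hco hr.le t hz
  have hpos : 0 < ‖z‖ ^ (1 - t) * r ^ t :=
    mul_pos (Real.rpow_pos_of_pos (by simpa using hz) _) (Real.rpow_pos_of_pos hr _)
  intro h0
  rw [h0, norm_zero] at h
  linarith

/-! ### Membership of the homotopy -/

lemma Hfun_mem (n k h : ℕ) (R θ β r t0 : ℝ)
    (hk : 1 ≤ k) (hR : 0 < R) (hθ0 : 0 < θ) (hθ2 : θ < Real.pi / (2 * k))
    (hβ0 : 0 < β) (hr0 : 0 < r) (ht0d : t0 = r ^ (n + 2)) (ht01 : t0 < 1)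
    (ht0k : t0 ^ k ≤ Real.cos ((k : ℝ) * θ) / (2 * R)) (hrβ : r < t0 ^ β)
    {t : ℝ} (htl : 0 ≤ t) (htu : t ≤ 1) {z : Fin (n + 2) → ℂ}
    (hz : z ∈ Bset (n + 2) k h R θ β) :
    Hfun n r t0 (2 * Real.pi * (h : ℝ) / (k : ℝ)) t z ∈ Bset (n + 2) k h R θ β := by
  set ω : ℝ := 2 * Real.pi * (h : ℝ) / (k : ℝ) with hω
  have hk0 : (0 : ℝ) < k := by exact_mod_cast hk
  obtain ⟨hu0, hzj⟩ := mem_ne_zero hk hR hz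
  set u : ℂ := pprod z with hu
  set a : ℝ := argω ω u with ha
  have habs_u : 0 < ‖u‖ := by simpa using hu0
  have haθ : |a| < θ := by
    rw [ha]
    simp only [argω]
    exact hz.2.2
  have ht0pos : 0 < t0 := by rw [ht0d]; positivity
  -- sector data for u
  have hpolar := polar_decomp ω hu0
  rw [← ha] at hpolar
  have hkey : ‖u‖ ^ k < Real.cos ((k : ℝ) * a) / R := by
    apply (polar_mem_iff hk hR hθ2 habs_u haθ).mp
    rw [← hpolar]
    exact hz.2
  -- components
  set P : ℂ := ∏ i : Fin (n + 1), hco r t (z i.succ) with hP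
  have hPne : P ≠ 0 :=
    Finset.prod_ne_zero_iff.mpr (fun i _ => hco_ne_zero hr0 t (hzj i.succ))
  have hprodx : (0 : ℝ) < ∏ i : Fin (n + 1), ‖z i.succ‖ :=
    Finset.prod_pos (fun i _ => norm_pos_iff.mpr (hzj i.succ))
  have habsP : ‖P‖
      = (∏ i : Fin (n + 1), ‖z i.succ‖) ^ (1 - t) * (r ^ t) ^ (n + 1) := by
    rw [hP, norm_prod,
      Finset.prod_congr rfl (fun i _ => abs_hco hr0.le t (hzj i.succ)),
      Finset.prod_mul_distrib, Finset.prod_const,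
      ← Real.finset_prod_rpow _ _ (fun i _ => norm_nonneg _) _]
    simp [Finset.card_univ]
  have habs_u_prod : ‖u‖
      = ‖z 0‖ * ∏ i : Fin (n + 1), ‖z i.succ‖ := by
    rw [hu, pprod, norm_prod, Fin.prod_univ_succ]
  have ht0t : t0 ^ t = (r ^ t) ^ ((n + 2 : ℕ) : ℝ) := by
    rw [ht0d, ← Real.rpow_natCast r (n + 2), ← Real.rpow_mul hr0.le, ← Real.rpow_mul hr0.le,
      mul_comm]
  set ρ : ℝ := ‖u‖ ^ (1 - t) * t0 ^ t with hρdef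
  have hρpos : 0 < ρ :=
    mul_pos (Real.rpow_pos_of_pos habs_u _) (Real.rpow_pos_of_pos ht0pos _)
  have habs_uT : ‖uT t0 ω t u‖ = ρ := by
    rw [uT, norm_mul, Complex.norm_real, Real.norm_eq_abs, Complex.norm_exp_ofReal_mul_I, mul_one, ← hρdef, _root_.abs_of_pos hρpos]
  have hpprodH : pprod (Hfun n r t0 ω t z) = uT t0 ω t u := by
    rw [pprod, Fin.prod_univ_succ]
    simp only [Hfun, Fin.cases_zero, Fin.cases_succ]
    rw [← hu, ← hP]
    exact div_mul_cancel₀ _ hPne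
  have habsH0 : ‖Hfun n r t0 ω t z 0‖ = ‖z 0‖ ^ (1 - t) * r ^ t := by
    simp only [Hfun, Fin.cases_zero]
    rw [← hu, ← hP, norm_div, habs_uT, habsP, div_eq_iff (ne_of_gt (mul_pos (Real.rpow_pos_of_pos hprodx _) (pow_pos (Real.rpow_pos_of_pos hr0 t) _))), hρdef,
      habs_u_prod, Real.mul_rpow (norm_nonneg _) hprodx.le, ht0t]
    rw [show ((n + 2 : ℕ) : ℝ) = ((n + 1 : ℕ) : ℝ) + 1 by push_cast; ring,
      Real.rpow_add (Real.rpow_pos_of_pos hr0 t), Real.rpow_one, Real.rpow_natCast]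
    ring
  -- W membership
  have hWb : ∀ j, ‖Hfun n r t0 ω t z j‖ < ρ ^ β := by
    have hρβ : ρ ^ β = (‖u‖ ^ β) ^ (1 - t) * (t0 ^ β) ^ t := by
      rw [hρdef]; exact rpow_gm _ _ β t (norm_nonneg u) ht0pos.le
    intro j
    induction j using Fin.cases with
    | zero =>
        rw [habsH0, hρβ]
        exact aux_gm (norm_nonneg _) hr0.le (Real.rpow_pos_of_pos habs_u β)
          (hz.1 0) hrβ htl htu
    | succ i =>
        rw [show Hfun n r t0 ω t z i.succ = hco r t (z i.succ) from rfl,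
          abs_hco hr0.le t (hzj i.succ), hρβ]
        exact aux_gm (norm_nonneg _) hr0.le (Real.rpow_pos_of_pos habs_u β)
          (hz.1 i.succ) hrβ htl htu
  -- sector membership
  set ψ : ℝ := (1 - t) * a with hψ
  have hψa : |ψ| ≤ |a| := by
    rw [hψ, abs_mul]
    calc |1 - t| * |a| ≤ 1 * |a| := by
          apply mul_le_mul_of_nonneg_right _ (abs_nonneg a)
          rw [_root_.abs_of_nonneg (by linarith)]; linarith
      _ = |a| := one_mul _
  have hψθ : |ψ| < θ := lt_of_le_of_lt hψa haθ
  have huT_eq : uT t0 ω t u = (ρ : ℂ) * Complex.exp (((ψ + ω : ℝ) : ℂ) * Complex.I) := by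
    rw [uT, ← ha, ← hρdef, ← hψ]
  -- cosine bounds
  have hkθ2 : (k : ℝ) * θ < Real.pi / 2 := by
    rw [lt_div_iff₀ (by positivity : (0:ℝ) < 2 * k)] at hθ2
    linarith
  have hka : |(k : ℝ) * a| < (k : ℝ) * θ := by
    rw [abs_mul, _root_.abs_of_pos hk0]
    exact mul_lt_mul_of_pos_left haθ hk0
  have hkψ : |(k : ℝ) * ψ| ≤ |(k : ℝ) * a| := by
    rw [abs_mul ((k : ℝ)) ψ, abs_mul ((k : ℝ)) a]
    exact mul_le_mul_of_nonneg_left hψa (abs_nonneg _)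
  have hcos_ka : 0 < Real.cos ((k : ℝ) * a) := by
    rw [← Real.cos_abs]
    apply Real.cos_pos_of_mem_Ioo
    constructor
    · linarith [abs_nonneg ((k : ℝ) * a), Real.pi_pos]
    · linarith
  have hcoskθ : Real.cos ((k : ℝ) * θ) ≤ Real.cos ((k : ℝ) * a) := by
    rw [← Real.cos_abs ((k : ℝ) * a)]
    apply Real.cos_le_cos_of_nonneg_of_le_pi (abs_nonneg _) (by linarith [Real.pi_pos]) hka.le
  have ht0k' : t0 ^ k < Real.cos ((k : ℝ) * a) / R := by
    calc t0 ^ k ≤ Real.cos ((k : ℝ) * θ) / (2 * R) := ht0k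
      _ ≤ Real.cos ((k : ℝ) * a) / (2 * R) :=
          (div_le_div_iff_of_pos_right (by linarith)).mpr hcoskθ
      _ < Real.cos ((k : ℝ) * a) / R :=
          div_lt_div_of_pos_left hcos_ka hR (by linarith)
  have hρk : ρ ^ k = (‖u‖ ^ k) ^ (1 - t) * (t0 ^ k) ^ t := by
    rw [hρdef]; exact pow_gm _ _ t k (norm_nonneg u) ht0pos.le
  have hcosψa : Real.cos ((k : ℝ) * a) ≤ Real.cos ((k : ℝ) * ψ) := by
    rw [← Real.cos_abs ((k : ℝ) * a), ← Real.cos_abs ((k : ℝ) * ψ)]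
    apply Real.cos_le_cos_of_nonneg_of_le_pi (abs_nonneg _)
      (by linarith [Real.pi_pos]) hkψ
  have hsec : ρ ^ k < Real.cos ((k : ℝ) * ψ) / R := by
    have hM : ρ ^ k < Real.cos ((k : ℝ) * a) / R := by
      rw [hρk]
      exact aux_gm_const (pow_nonneg (norm_nonneg u) k) (pow_nonneg ht0pos.le k)
        (by positivity) hkey ht0k' htl htu
    calc ρ ^ k < Real.cos ((k : ℝ) * a) / R := hM
      _ ≤ Real.cos ((k : ℝ) * ψ) / R := (div_le_div_iff_of_pos_right hR).mpr hcosψa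
  refine ⟨fun j => ?_, ?_⟩
  · rw [show pprod (Hfun n r t0 ω t z) = uT t0 ω t u from hpprodH, habs_uT]
    exact hWb j
  · rw [show pprod (Hfun n r t0 ω t z) = uT t0 ω t u from hpprodH, huT_eq]
    exact (polar_mem_iff hk hR hθ2 hρpos hψθ).mpr hsec


/-! ### Membership of the section -/

lemma Gfun_mem (n k h : ℕ) (R θ β r t0 : ℝ)
    (hk : 1 ≤ k) (hR : 0 < R) (hθ0 : 0 < θ) (hθ2 : θ < Real.pi / (2 * k))
    (hβ0 : 0 < β) (hr0 : 0 < r) (ht0d : t0 = r ^ (n + 2))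
    (ht0k : t0 ^ k ≤ Real.cos ((k : ℝ) * θ) / (2 * R)) (hrβ : r < t0 ^ β)
    (w : Fin (n + 1) → ℂ) (hw : ∀ i, ‖w i‖ = 1) :
    Gfun n r ((t0 : ℂ) * Complex.exp
        (((2 * Real.pi * (h : ℝ) / (k : ℝ) : ℝ) : ℂ) * Complex.I)) w
      ∈ Bset (n + 2) k h R θ β := by
  set ω : ℝ := 2 * Real.pi * (h : ℝ) / (k : ℝ) with hω
  set u0 : ℂ := (t0 : ℂ) * Complex.exp ((ω : ℂ) * Complex.I) with hu0def
  have ht0pos : 0 < t0 := by rw [ht0d]; positivity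
  have hwne : ∀ i, w i ≠ 0 := fun i => by
    intro h0; have := hw i; rw [h0, norm_zero] at this; norm_num at this
  have hPw : ‖∏ i : Fin (n + 1), w i‖ = 1 := by
    rw [norm_prod]; simp [hw]
  have hPwne : (∏ i : Fin (n + 1), w i) ≠ 0 := by
    intro h0; rw [h0, norm_zero] at hPw; norm_num at hPw
  have hden : ((r : ℂ) ^ (n + 1) * ∏ i : Fin (n + 1), w i) ≠ 0 :=
    mul_ne_zero (pow_ne_zero _ (by exact_mod_cast hr0.ne')) hPwne
  have habs_u0 : ‖u0‖ = t0 := by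
    rw [hu0def, norm_mul, Complex.norm_real, Real.norm_eq_abs, Complex.norm_exp_ofReal_mul_I, mul_one,
      _root_.abs_of_pos ht0pos]
  have hprod : pprod (Gfun n r u0 w) = u0 := by
    rw [pprod, Fin.prod_univ_succ]
    simp only [Gfun, Fin.cases_zero, Fin.cases_succ]
    rw [Finset.prod_mul_distrib, Finset.prod_const, Finset.card_univ, Fintype.card_fin]
    exact div_mul_cancel₀ _ hden
  have habs0 : ‖Gfun n r u0 w 0‖ = r := by
    simp only [Gfun, Fin.cases_zero]
    rw [norm_div, habs_u0, norm_mul, norm_pow, Complex.norm_real, Real.norm_eq_abs, _root_.abs_of_pos hr0,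
      hPw, mul_one, ht0d, pow_succ, mul_comm, mul_div_assoc,
      div_self (pow_ne_zero _ hr0.ne'), mul_one]
  have habss : ∀ i : Fin (n + 1),
      ‖Gfun n r u0 w i.succ‖ = r := by
    intro i
    simp only [Gfun, Fin.cases_succ]
    rw [norm_mul, Complex.norm_real, Real.norm_eq_abs, _root_.abs_of_pos hr0, hw, mul_one]
  refine ⟨fun j => ?_, ?_⟩
  · rw [show pprod (Gfun n r u0 w) = u0 from hprod, habs_u0]
    induction j using Fin.cases with
    | zero => rw [habs0]; exact hrβ
    | succ i => rw [habss i]; exact hrβ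
  · rw [show pprod (Gfun n r u0 w) = u0 from hprod]
    have he : u0 = ((t0 : ℝ) : ℂ) * Complex.exp ((((0 : ℝ) + ω : ℝ) : ℂ) * Complex.I) := by
      rw [hu0def]; norm_num
    rw [he]
    apply (polar_mem_iff hk hR hθ2 ht0pos (by simpa using hθ0)).mpr
    rw [mul_zero, Real.cos_zero]
    calc t0 ^ k ≤ Real.cos ((k : ℝ) * θ) / (2 * R) := ht0k
      _ ≤ 1 / (2 * R) := by
          apply (div_le_div_iff_of_pos_right (by linarith)).mpr (Real.cos_le_one _)
      _ < 1 / R := div_lt_div_of_pos_left one_pos hR (by linarith)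

/-! ### Endpoint identities -/

lemma Hfun_zero (n : ℕ) (r t0 ω : ℝ) (hr0 : 0 < r) {z : Fin (n + 2) → ℂ}
    (hzj : ∀ j, z j ≠ 0) : Hfun n r t0 ω 0 z = z := by
  have hu0 : pprod z ≠ 0 := Finset.prod_ne_zero_iff.mpr (fun j _ => hzj j)
  have hco0 : ∀ wc : ℂ, wc ≠ 0 → hco r 0 wc = wc := by
    intro wc hwc
    rw [hco, sub_zero, Real.rpow_one, Real.rpow_zero, mul_one]
    push_cast
    rw [div_mul_cancel₀]
    exact_mod_cast norm_ne_zero_iff.mpr hwc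
  funext j
  induction j using Fin.cases with
  | zero =>
      simp only [Hfun, Fin.cases_zero]
      have hP : (∏ i : Fin (n + 1), hco r 0 (z i.succ)) = ∏ i : Fin (n + 1), z i.succ :=
        Finset.prod_congr rfl (fun i _ => hco0 _ (hzj i.succ))
      have huT0 : uT t0 ω 0 (pprod z) = pprod z := by
        rw [uT, sub_zero, Real.rpow_one, Real.rpow_zero, mul_one, one_mul]
        exact (polar_decomp ω hu0).symm
      rw [hP, huT0, pprod, Fin.prod_univ_succ]
      exact mul_div_cancel_right₀ _ (Finset.prod_ne_zero_iff.mpr (fun i _ => hzj i.succ))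
  | succ i =>
      simp only [Hfun, Fin.cases_succ]
      exact hco0 _ (hzj i.succ)

lemma Hfun_one (n : ℕ) (r t0 ω : ℝ) (hr0 : 0 < r) {z : Fin (n + 2) → ℂ}
    (hzj : ∀ j, z j ≠ 0) :
    Hfun n r t0 ω 1 z
      = Gfun n r ((t0 : ℂ) * Complex.exp ((ω : ℂ) * Complex.I)) (Ffun n z) := by
  have hco1 : ∀ wc : ℂ, hco r 1 wc = (r : ℂ) * (wc / ((‖wc‖ : ℝ) : ℂ)) := by
    intro wc
    rw [hco, sub_self, Real.rpow_zero, Real.rpow_one, one_mul]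
    push_cast
    ring
  funext j
  induction j using Fin.cases with
  | zero =>
      simp only [Hfun, Fin.cases_zero, Gfun]
      congr 1
      · rw [uT, sub_self, Real.rpow_zero, Real.rpow_one, one_mul, zero_mul, zero_add]
      · rw [Finset.prod_congr rfl (fun i _ => hco1 (z i.succ)), Finset.prod_mul_distrib,
          Finset.prod_const, Finset.card_univ, Fintype.card_fin]
        rfl
  | succ i =>
      simp only [Hfun, Fin.cases_succ, Gfun]
      rw [hco1]
      rfl


/-! ### Continuity -/

lemma contAt_hco {r : ℝ} (hr : 0 < r) {p : ℝ × ℂ} (hp : p.2 ≠ 0) :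
    ContinuousAt (fun q : ℝ × ℂ => hco r q.1 q.2) p := by
  have habs : ContinuousAt (fun q : ℝ × ℂ => ‖q.2‖) p :=
    (continuous_norm.comp continuous_snd).continuousAt
  have h1 : ContinuousAt (fun q : ℝ × ℂ => (‖q.2‖) ^ (1 - q.1)) p :=
    ContinuousAt.rpow habs ((continuous_const.sub continuous_fst).continuousAt)
      (Or.inl (by simpa using hp))
  have h2 : ContinuousAt (fun q : ℝ × ℂ => r ^ q.1) p :=
    ContinuousAt.rpow continuousAt_const continuous_fst.continuousAt (Or.inl hr.ne')
  have h3 : ContinuousAt (fun q : ℝ × ℂ => q.2 / ((‖q.2‖ : ℝ) : ℂ)) p := by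
    apply ContinuousAt.div continuous_snd.continuousAt
    · exact ((Complex.continuous_ofReal.comp continuous_norm).comp
        continuous_snd).continuousAt
    · simpa using hp
  exact h3.mul (Complex.continuous_ofReal.continuousAt.comp (h1.mul h2))

lemma contAt_uT {t0 ω : ℝ} (ht0 : 0 < t0) {p : ℝ × ℂ} (hp : p.2 ≠ 0)
    (hre : 0 < (p.2 * Complex.exp (((-ω : ℝ) : ℂ) * Complex.I)).re) :
    ContinuousAt (fun q : ℝ × ℂ => uT t0 ω q.1 q.2) p := by
  have habs : ContinuousAt (fun q : ℝ × ℂ => ‖q.2‖) p :=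
    (continuous_norm.comp continuous_snd).continuousAt
  have h1 : ContinuousAt (fun q : ℝ × ℂ => (‖q.2‖) ^ (1 - q.1)) p :=
    ContinuousAt.rpow habs ((continuous_const.sub continuous_fst).continuousAt)
      (Or.inl (by simpa using hp))
  have h2 : ContinuousAt (fun q : ℝ × ℂ => t0 ^ q.1) p :=
    ContinuousAt.rpow continuousAt_const continuous_fst.continuousAt (Or.inl ht0.ne')
  have harg : ContinuousAt (fun q : ℝ × ℂ => argω ω q.2) p := by
    have hc : Continuous (fun q : ℝ × ℂ => q.2 * Complex.exp (((-ω : ℝ) : ℂ) * Complex.I)) :=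
      continuous_snd.mul continuous_const
    exact ContinuousAt.comp
      (f := fun q : ℝ × ℂ => q.2 * Complex.exp (((-ω : ℝ) : ℂ) * Complex.I))
      (Complex.continuousAt_arg (Complex.mem_slitPlane_iff.mpr (Or.inl hre)))
      hc.continuousAt
  have h4 : ContinuousAt
      (fun q : ℝ × ℂ => ((((1 - q.1) * argω ω q.2 + ω : ℝ) : ℂ) * Complex.I)) p := by
    apply ContinuousAt.mul _ continuousAt_const
    exact Complex.continuous_ofReal.continuousAt.comp
      ((((continuous_const.sub continuous_fst).continuousAt.mul harg)).add continuousAt_const)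
  exact (Complex.continuous_ofReal.continuousAt.comp (h1.mul h2)).mul
    (Complex.continuous_exp.continuousAt.comp h4)

lemma re_pos_of_mem {n k h : ℕ} {R θ β : ℝ} (hk : 1 ≤ k) (hR : 0 < R) (hθ0 : 0 < θ)
    (hθ2 : θ < Real.pi / (2 * k)) {z : Fin (n + 2) → ℂ} (hz : z ∈ Bset (n + 2) k h R θ β) :
    0 < (pprod z * Complex.exp
      (((-(2 * Real.pi * (h : ℝ) / (k : ℝ)) : ℝ) : ℂ) * Complex.I)).re := by
  have hu0 : pprod z ≠ 0 := (mem_ne_zero hk hR hz).1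
  set w : ℂ := pprod z * Complex.exp
    (((-(2 * Real.pi * (h : ℝ) / (k : ℝ)) : ℝ) : ℂ) * Complex.I) with hwdef
  have hwne : w ≠ 0 := mul_ne_zero hu0 (Complex.exp_ne_zero _)
  have hargw : |Complex.arg w| < θ := hz.2.2
  have hk1 : (1 : ℝ) ≤ (k : ℝ) := by exact_mod_cast hk
  have hθπ : θ < Real.pi / 2 := by
    have : Real.pi / (2 * k) ≤ Real.pi / 2 := by
      apply div_le_div_of_nonneg_left Real.pi_pos.le (by norm_num)
      linarith
    linarith
  have hcos : 0 < Real.cos (Complex.arg w) := by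
    rw [← Real.cos_abs]
    apply Real.cos_pos_of_mem_Ioo
    constructor
    · linarith [abs_nonneg (Complex.arg w), Real.pi_pos]
    · linarith
  have habsw : 0 < ‖w‖ := norm_pos_iff.mpr hwne
  have hre : w.re = Real.cos (Complex.arg w) * ‖w‖ := by
    rw [Complex.cos_arg hwne]
    field_simp
  show 0 < w.re
  rw [hre]
  exact mul_pos hcos habsw


/-! ### Main assembly -/

lemma main (n k h : ℕ) (R θ β : ℝ) (hk : 1 ≤ k) (hh : h < k) (hR : 0 < R)
    (hθ : θ ∈ Set.Ioo 0 (Real.pi / (2 * (k : ℝ))))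
    (hβ : β ∈ Set.Ioo 0 (1 / ((n + 2 : ℕ) : ℝ))) :
    (Bset (n + 2) k h R θ β).Nonempty ∧
    Nonempty (ContinuousMap.HomotopyEquiv (Bset (n + 2) k h R θ β)
      (Fin (n + 1) → Metric.sphere (0 : ℂ) 1)) := by
  obtain ⟨hθ0, hθ2⟩ := hθ
  obtain ⟨hβ0, hβ2⟩ := hβ
  have hk0 : (0 : ℝ) < k := by exact_mod_cast hk
  have hkθ : (k : ℝ) * θ < Real.pi / 2 := by
    rw [lt_div_iff₀ (by positivity : (0 : ℝ) < 2 * k)] at hθ2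
    linarith
  have hcosθ : 0 < Real.cos ((k : ℝ) * θ) := by
    apply Real.cos_pos_of_mem_Ioo
    constructor
    · nlinarith [Real.pi_pos, mul_pos hk0 hθ0]
    · exact hkθ
  set X : ℝ := Real.cos ((k : ℝ) * θ) / (2 * R) with hXdef
  have hX0 : 0 < X := div_pos hcosθ (by linarith)
  set r : ℝ := min (1 / 2 : ℝ) (X ^ ((k : ℝ) * ((n : ℝ) + 2))⁻¹) with hrdef
  have hr0 : 0 < r := lt_min (by norm_num) (Real.rpow_pos_of_pos hX0 _)
  have hr1 : r < 1 := lt_of_le_of_lt (min_le_left _ _) (by norm_num)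
  set t0 : ℝ := r ^ (n + 2) with ht0def
  have ht0pos : 0 < t0 := pow_pos hr0 _
  have ht01 : t0 < 1 := pow_lt_one₀ hr0.le hr1 (by omega)
  have ht0k : t0 ^ k ≤ X := by
    have h1 : r ≤ X ^ ((k : ℝ) * ((n : ℝ) + 2))⁻¹ := min_le_right _ _
    have h2 : t0 ^ k = r ^ ((n + 2) * k) := by rw [ht0def, ← pow_mul]
    have h3 : (X ^ ((k : ℝ) * ((n : ℝ) + 2))⁻¹) ^ ((n + 2) * k : ℕ) = X := by
      rw [← Real.rpow_natCast (X ^ ((k : ℝ) * ((n : ℝ) + 2))⁻¹) ((n + 2) * k),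
        ← Real.rpow_mul hX0.le,
        show ((k : ℝ) * ((n : ℝ) + 2))⁻¹ * (((n + 2) * k : ℕ) : ℝ) = 1 by
          have : ((k : ℝ) * ((n : ℝ) + 2)) ≠ 0 := by positivity
          push_cast
          field_simp]
      exact Real.rpow_one X
    rw [h2, ← h3]
    exact pow_le_pow_left₀ hr0.le h1 _
  have hrβ : r < t0 ^ β := by
    have h1 : t0 ^ β = r ^ (((n : ℝ) + 2) * β) := by
      rw [ht0def, ← Real.rpow_natCast r (n + 2), ← Real.rpow_mul hr0.le]
      push_cast
      ring_nf
    rw [h1]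
    have h2 : ((n : ℝ) + 2) * β < 1 := by
      rw [lt_div_iff₀ (by positivity : (0 : ℝ) < ((n + 2 : ℕ) : ℝ))] at hβ2
      push_cast at hβ2
      linarith
    calc r = r ^ (1 : ℝ) := (Real.rpow_one r).symm
      _ < r ^ (((n : ℝ) + 2) * β) := Real.rpow_lt_rpow_of_exponent_gt hr0 hr1 h2
  set ω : ℝ := 2 * Real.pi * (h : ℝ) / (k : ℝ) with hωdef
  set u0 : ℂ := (t0 : ℂ) * Complex.exp ((ω : ℂ) * Complex.I) with hu0def
  set B : Set (Fin (n + 2) → ℂ) := Bset (n + 2) k h R θ β with hBdef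
  -- sphere facts
  have hwabs : ∀ (w : Fin (n + 1) → Metric.sphere (0 : ℂ) 1) (i : Fin (n + 1)),
      ‖(w i : ℂ)‖ = 1 := by
    intro w i
    have := mem_sphere_zero_iff_norm.mp (w i).2
    exact this
  have hwne : ∀ (w : Fin (n + 1) → Metric.sphere (0 : ℂ) 1) (i : Fin (n + 1)),
      ((w i : ℂ)) ≠ 0 := by
    intro w i h0
    have := hwabs w i
    rw [h0, norm_zero] at this
    norm_num at this
  have hF_mem : ∀ z ∈ B, ∀ i : Fin (n + 1), Ffun n z i ∈ Metric.sphere (0 : ℂ) 1 := by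
    intro z hz i
    have hne := (mem_ne_zero hk hR hz).2 i.succ
    apply mem_sphere_zero_iff_norm.mpr
    rw [Ffun, norm_div, Complex.norm_real, Real.norm_eq_abs,
      _root_.abs_of_pos (norm_pos_iff.mpr hne), div_self (norm_ne_zero_iff.mpr hne)]
  have hG_mem : ∀ w : Fin (n + 1) → Metric.sphere (0 : ℂ) 1,
      Gfun n r u0 (fun i => (w i : ℂ)) ∈ B := by
    intro w
    exact Gfun_mem n k h R θ β r t0 hk hR hθ0 hθ2 hβ0 hr0 ht0def ht0k hrβ _
      (fun i => hwabs w i)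
  -- the continuous maps
  let Fc : C(↥B, Fin (n + 1) → Metric.sphere (0 : ℂ) 1) :=
    { toFun := fun z i => ⟨Ffun n z.1 i, hF_mem z.1 z.2 i⟩
      continuous_toFun := by
        apply continuous_pi
        intro i
        apply Continuous.subtype_mk
        rw [continuous_iff_continuousAt]
        intro z
        have hne := (mem_ne_zero hk hR z.2).2 i.succ
        apply ContinuousAt.div
        · exact ((continuous_apply i.succ).comp continuous_subtype_val).continuousAt
        · exact ((Complex.continuous_ofReal.comp continuous_norm).comp
            ((continuous_apply i.succ).comp continuous_subtype_val)).continuousAt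
        · simpa using hne }
  let Gc : C(Fin (n + 1) → Metric.sphere (0 : ℂ) 1, ↥B) :=
    { toFun := fun w => ⟨Gfun n r u0 (fun i => (w i : ℂ)), hG_mem w⟩
      continuous_toFun := by
        apply Continuous.subtype_mk
        apply continuous_pi
        intro j
        induction j using Fin.cases with
        | zero =>
            simp only [Gfun, Fin.cases_zero]
            apply Continuous.div continuous_const
            · exact continuous_const.mul (continuous_finset_prod _
                (fun i _ => continuous_subtype_val.comp (continuous_apply i)))
            · intro w
              exact mul_ne_zero (pow_ne_zero _ (by exact_mod_cast hr0.ne'))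
                (Finset.prod_ne_zero_iff.mpr (fun i _ => hwne w i))
        | succ i =>
            simp only [Gfun, Fin.cases_succ]
            exact continuous_const.mul (continuous_subtype_val.comp (continuous_apply i)) }
  -- membership of the homotopy
  have hHmem : ∀ (t : ↥unitInterval) (z : ↥B),
      Hfun n r t0 ω (1 - (t : ℝ)) z.1 ∈ B := by
    intro t z
    exact Hfun_mem n k h R θ β r t0 hk hR hθ0 hθ2 hβ0 hr0 ht0def ht01 ht0k hrβ
      (by linarith [t.2.2]) (by linarith [t.2.1]) z.2
  -- continuity of the homotopy
  have hcont : Continuous (fun p : ↥unitInterval × ↥B =>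
      Hfun n r t0 ω (1 - (p.1 : ℝ)) p.2.1) := by
    have htc : Continuous (fun p : ↥unitInterval × ↥B => (1 - (p.1 : ℝ))) :=
      continuous_const.sub (continuous_subtype_val.comp continuous_fst)
    have hppc : Continuous (fun p : ↥unitInterval × ↥B => pprod p.2.1) := by
      apply continuous_finset_prod
      intro j _
      exact (continuous_apply j).comp (continuous_subtype_val.comp continuous_snd)
    rw [continuous_iff_continuousAt]
    intro p
    apply continuousAt_pi.mpr
    intro j
    obtain ⟨hu0', hzj⟩ := mem_ne_zero hk hR p.2.2
    induction j using Fin.cases with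
    | zero =>
        simp only [Hfun, Fin.cases_zero]
        apply ContinuousAt.div
        · exact ContinuousAt.comp
            (f := fun p : ↥unitInterval × ↥B => ((1 - (p.1 : ℝ)), pprod p.2.1))
            (contAt_uT ht0pos hu0' (re_pos_of_mem hk hR hθ0 hθ2 p.2.2))
            ((htc.prodMk hppc).continuousAt)
        · have houter : Continuous (fun v : Fin (n + 1) → ℂ => ∏ i, v i) :=
            continuous_finset_prod _ (fun i _ => continuous_apply i)
          have hinner : ContinuousAt (fun p : ↥unitInterval × ↥B =>
              fun i : Fin (n + 1) => hco r (1 - (p.1 : ℝ)) (p.2.1 i.succ)) p := by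
            apply continuousAt_pi.mpr
            intro i
            exact ContinuousAt.comp
              (f := fun p : ↥unitInterval × ↥B => ((1 - (p.1 : ℝ)), p.2.1 i.succ))
              (contAt_hco hr0 (hzj i.succ))
              ((htc.prodMk ((continuous_apply i.succ).comp
                (continuous_subtype_val.comp continuous_snd))).continuousAt)
          exact ContinuousAt.comp
            (f := fun p : ↥unitInterval × ↥B =>
              fun i : Fin (n + 1) => hco r (1 - (p.1 : ℝ)) (p.2.1 i.succ))
            houter.continuousAt hinner
        · exact Finset.prod_ne_zero_iff.mpr (fun i _ => hco_ne_zero hr0 _ (hzj i.succ))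
    | succ i =>
        simp only [Hfun, Fin.cases_succ]
        exact ContinuousAt.comp
          (f := fun p : ↥unitInterval × ↥B => ((1 - (p.1 : ℝ)), p.2.1 i.succ))
          (contAt_hco hr0 (hzj i.succ))
          ((htc.prodMk ((continuous_apply i.succ).comp
            (continuous_subtype_val.comp continuous_snd))).continuousAt)
  -- the homotopy
  let Hmt : ContinuousMap.Homotopy (Gc.comp Fc) (ContinuousMap.id ↥B) :=
    { toFun := fun p => ⟨Hfun n r t0 ω (1 - (p.1 : ℝ)) p.2.1, hHmem p.1 p.2⟩
      continuous_toFun := hcont.subtype_mk _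
      map_zero_left := by
        intro z
        apply Subtype.ext
        show Hfun n r t0 ω (1 - ((0 : ↥unitInterval) : ℝ)) z.1 = _
        rw [show (1 - ((0 : ↥unitInterval) : ℝ)) = 1 by norm_num]
        rw [Hfun_one n r t0 ω hr0 (mem_ne_zero hk hR z.2).2]
        rfl
      map_one_left := by
        intro z
        apply Subtype.ext
        show Hfun n r t0 ω (1 - ((1 : ↥unitInterval) : ℝ)) z.1 = z.1
        rw [show (1 - ((1 : ↥unitInterval) : ℝ)) = 0 by norm_num]
        exact Hfun_zero n r t0 ω hr0 (mem_ne_zero hk hR z.2).2 }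
  constructor
  · exact ⟨Gfun n r u0 (fun _ => 1),
      hG_mem (fun _ => ⟨1, by simp⟩)⟩
  · refine ⟨{ toFun := Fc, invFun := Gc, left_inv := ⟨Hmt⟩, right_inv := ?_ }⟩
    have hFG : Fc.comp Gc = ContinuousMap.id _ := by
      apply ContinuousMap.ext
      intro w
      funext i
      apply Subtype.ext
      show Ffun n (Gfun n r u0 (fun i => (w i : ℂ))) i = (w i : ℂ)
      simp only [Ffun, Gfun, Fin.cases_succ]
      rw [norm_mul, Complex.norm_real, Real.norm_eq_abs, _root_.abs_of_pos hr0, hwabs w i, mul_one,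
        mul_comm, mul_div_assoc, div_self (by exact_mod_cast hr0.ne' : (r : ℂ) ≠ 0), mul_one]
    rw [hFG]

end Stmt17Aux

/-- Each local basin `B_h(R,θ,β)` is nonempty and homotopy equivalent to
the torus `(S¹)^{d-1}`. -/
theorem stmt17 (d k h : ℕ) [NeZero d] (hd : 2 ≤ d) (hk : 1 ≤ k) (hh : h < k)
    (R θ β : ℝ) (hR : 0 < R) (hθ : θ ∈ Ioo 0 (Real.pi / (2 * (k : ℝ))))
    (hβ : β ∈ Ioo 0 (1 / (d : ℝ))) :
    (Bset d k h R θ β).Nonempty ∧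
    Nonempty (ContinuousMap.HomotopyEquiv (Bset d k h R θ β)
      (Fin (d - 1) → Metric.sphere (0 : ℂ) 1)) := by
  obtain ⟨n, rfl⟩ : ∃ n, d = n + 2 := ⟨d - 2, by omega⟩
  exact Stmt17Aux.main n k h R θ β hk hh hR hθ hβ
end
end

section
/- Fix an integer d≥1 and define a sequence (σ_r)_{r≥1} of positive reals by σ_1:=1 and, for r≥2, σ_r:=d·Σ_{k=2}^{r} Σ σ_{r_1}⋯σ_{r_k}, where the inner sum ranges over all ordered k-tuples (r_1,…,r_k) of positive integers with r_1+⋯+r_k=r. Then sup_{r≥1}(1/r)·log σ_r<∞; equivalently, there exists C>1 such that σ_r≤C^r for all r≥1. -/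
open Complex Metric Set Filter Topology Asymptotics

noncomputable section

/-- Sum over all compositions of `n` of the product of `f` over blocks. -/
def compSum (f : ℕ → ℝ) (n : ℕ) : ℝ :=
  ∑ c : Composition n, (c.blocks.map f).prod

lemma prod_blocksFun_eq (f : ℕ → ℝ) {n : ℕ} (c : Composition n) :
    ∏ i, f (c.blocksFun i) = (c.blocks.map f).prod := by
  rw [← Composition.ofFn_blocksFun c, List.map_ofFn, List.prod_ofFn]
  rfl

lemma compSum_zero (f : ℕ → ℝ) : compSum f 0 = 1 := by
  have h : ∀ c : Composition 0, (c.blocks.map f).prod = 1 := by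
    intro c
    have : c.blocks = [] := by
      have hs := c.blocks_sum
      rcases hb : c.blocks with _ | ⟨a, l⟩
      · rfl
      · exfalso
        have ha : 0 < a := c.blocks_pos (by rw [hb]; exact List.mem_cons_self)
        rw [hb] at hs
        simp [List.sum_cons] at hs
        omega
    simp [this]
  rw [compSum]
  rw [Finset.sum_congr rfl (fun c _ => h c)]
  simp [composition_card]

/-- Prepend a first block. -/
def consComp {n : ℕ} (p : Σ a : Fin (n + 1), Composition (n - (a : ℕ))) :
    Composition (n + 1) :=
  ⟨((p.1 : ℕ) + 1) :: p.2.blocks, by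
    intro i hi
    rcases List.mem_cons.1 hi with h | h
    · omega
    · exact p.2.blocks_pos h, by
    have := p.2.blocks_sum
    have := p.1.isLt
    simp [List.sum_cons, this]
    omega⟩

lemma consComp_injective (n : ℕ) : Function.Injective (consComp (n := n)) := by
  rintro ⟨a, c⟩ ⟨a', c'⟩ h
  have hb : ((a : ℕ) + 1) :: c.blocks = ((a' : ℕ) + 1) :: c'.blocks :=
    congrArg Composition.blocks h
  have ha : a = a' := Fin.ext (by
    have := List.head_eq_of_cons_eq hb
    omega)
  subst ha
  have hc : c = c' := Composition.ext (List.tail_eq_of_cons_eq hb)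
  subst hc
  rfl

lemma aux_pow_sum : ∀ n : ℕ, ∑ a : Fin (n + 1), 2 ^ (n - (a : ℕ) - 1) = 2 ^ n := by
  intro n
  induction n with
  | zero => simp
  | succ n ih =>
    rw [Fin.sum_univ_succ]
    have h2 : ∀ a : Fin (n + 1), 2 ^ (n + 1 - ((a.succ : Fin (n+2)) : ℕ) - 1)
        = 2 ^ (n - (a : ℕ) - 1) := by
      intro a; congr 1; simp only [Fin.val_succ]; omega
    rw [Finset.sum_congr rfl (fun a _ => h2 a), ih]
    simp
    try ring

lemma consComp_bijective (n : ℕ) : Function.Bijective (consComp (n := n)) := by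
  rw [Fintype.bijective_iff_injective_and_card]
  refine ⟨consComp_injective n, ?_⟩
  rw [Fintype.card_sigma, composition_card]
  simp only [composition_card]
  simpa using aux_pow_sum n

lemma compSum_succ (f : ℕ → ℝ) (n : ℕ) :
    compSum f (n + 1) = ∑ a : Fin (n + 1), f ((a : ℕ) + 1) * compSum f (n - (a : ℕ)) := by
  rw [compSum,
    ← Fintype.sum_bijective _ (consComp_bijective n)
      (fun p => f ((p.1 : ℕ) + 1) * (p.2.blocks.map f).prod)
      (fun c => (c.blocks.map f).prod)
      (fun p => by simp [consComp])]
  rw [← Finset.univ_sigma_univ, Finset.sum_sigma]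
  refine Finset.sum_congr rfl fun a _ => ?_
  rw [compSum, Finset.mul_sum]



lemma sum_inv_sq (m : ℕ) : ∑ a : Fin m, (1:ℝ)/(((a:ℕ):ℝ)+1)^2 ≤ 2 := by
  have key : ∀ m : ℕ, ∑ a : Fin m, (1:ℝ)/(((a:ℕ):ℝ)+1)^2 ≤ 2 - 2/((m:ℝ)+1) := by
    intro m
    induction m with
    | zero => simp
    | succ m ih =>
      rw [Fin.sum_univ_castSucc]
      have h1 : (1:ℝ)/(((m:ℕ):ℝ)+1)^2 ≤ 2/((m:ℝ)+1) - 2/((m:ℝ)+2) := by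
        have hm : (0:ℝ) < (m:ℝ)+1 := by positivity
        have hm2 : (0:ℝ) < (m:ℝ)+2 := by positivity
        rw [div_sub_div _ _ (ne_of_gt hm) (ne_of_gt hm2), div_le_div_iff₀ (by positivity) (by positivity)]
        ring_nf
        nlinarith
      have h2 : ((Fin.last m : Fin (m+1)) : ℕ) = m := rfl
      rw [h2]
      push_cast
      simp only [Fin.coe_castSucc]
      have h3 : (m:ℝ)+1+1 = (m:ℝ)+2 := by ring
      rw [h3]
      linarith
  have := key m
  have hm : (0:ℝ) < (m:ℝ)+1 := by positivity
  have : 0 ≤ 2/((m:ℝ)+1) := by positivity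
  linarith [key m]

lemma sum_inv_sq' (m : ℕ) : ∑ a : Fin m, (1:ℝ)/(((m - (a:ℕ) : ℕ):ℝ))^2 ≤ 2 := by
  have h : ∑ a : Fin m, (1:ℝ)/(((m - (a:ℕ) : ℕ):ℝ))^2
      = ∑ a : Fin m, (1:ℝ)/(((a:ℕ):ℝ)+1)^2 := by
    rw [← Fintype.sum_bijective (Fin.rev : Fin m → Fin m) Fin.rev_involutive.bijective
      _ (fun a : Fin m => (1:ℝ)/(((m - (a:ℕ) : ℕ):ℝ))^2) (fun a => rfl)]
    refine Finset.sum_congr rfl fun a _ => ?_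
    have ha : a.val < m := a.isLt
    have : m - ((a.rev : Fin m) : ℕ) = a.val + 1 := by
      simp [Fin.rev]
      omega
    simp only [this]
    push_cast
    ring
  rw [h]
  exact sum_inv_sq m

lemma keyineq (S T : ℝ) (hS : 1 ≤ S) (hT : 1 ≤ T) :
    1/(S^2*T^2) ≤ 2/(S+T)^2*(1/S^2+1/T^2) := by
  have hS0 : (0:ℝ) < S := by linarith
  have hT0 : (0:ℝ) < T := by linarith
  rw [div_add_div _ _ (by positivity) (by positivity), div_mul_div_comm,
    div_le_div_iff₀ (by positivity) (by positivity)]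
  nlinarith [mul_nonneg (sq_nonneg (S-T)) (sq_nonneg (S*T))]

lemma tail_bound (ε : ℝ) (hε : 0 ≤ ε) (m : ℕ)
    (H : ∀ k, 1 ≤ k → k ≤ m → compSum (fun b => ε/((b:ℕ):ℝ)^2) k ≤ 2*ε/((k:ℕ):ℝ)^2) :
    ∑ a : Fin m, (ε/(((a:ℕ):ℝ)+1)^2) * compSum (fun b => ε/((b:ℕ):ℝ)^2) (m - (a:ℕ))
      ≤ 16*ε^2/((m:ℝ)+1)^2 := by
  have step : ∀ a : Fin m,
      (ε/(((a:ℕ):ℝ)+1)^2) * compSum (fun b => ε/((b:ℕ):ℝ)^2) (m - (a:ℕ))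
        ≤ (4*ε^2/((m:ℝ)+1)^2) * (1/(((a:ℕ):ℝ)+1)^2 + 1/(((m - (a:ℕ) : ℕ):ℝ))^2) := by
    intro a
    have ha : (a:ℕ) < m := a.isLt
    set b : ℕ := m - (a:ℕ) with hbdef
    have hb1 : 1 ≤ b := by omega
    have hAB : (((a:ℕ):ℝ)+1) + (b:ℝ) = (m:ℝ)+1 := by
      have : (a:ℕ) + 1 + b = m + 1 := by omega
      have := congrArg (Nat.cast : ℕ → ℝ) this
      push_cast at this
      linarith
    have h1 : compSum (fun b => ε/((b:ℕ):ℝ)^2) b ≤ 2*ε/((b:ℕ):ℝ)^2 := H b hb1 (by omega)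
    have h2 : (ε/(((a:ℕ):ℝ)+1)^2) * compSum (fun b => ε/((b:ℕ):ℝ)^2) b
        ≤ (ε/(((a:ℕ):ℝ)+1)^2) * (2*ε/((b:ℕ):ℝ)^2) :=
      by
      have hnn : (0:ℝ) ≤ ε/(((a:ℕ):ℝ)+1)^2 := by positivity
      exact mul_le_mul_of_nonneg_left h1 hnn
    have hA1 : (1:ℝ) ≤ ((a:ℕ):ℝ)+1 := by
      have : (0:ℝ) ≤ ((a:ℕ):ℝ) := Nat.cast_nonneg _
      linarith
    have hB1 : (1:ℝ) ≤ (b:ℝ) := by exact_mod_cast hb1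
    have h3 := keyineq (((a:ℕ):ℝ)+1) (b:ℝ) hA1 hB1
    rw [hAB] at h3
    have h4 : (ε/(((a:ℕ):ℝ)+1)^2) * (2*ε/((b:ℕ):ℝ)^2)
        = 2*ε^2 * (1/(((((a:ℕ):ℝ)+1))^2*((b:ℝ))^2)) := by
      have hAne : ((((a:ℕ):ℝ))+1) ≠ 0 := by positivity
      have hBne : ((b:ℕ):ℝ) ≠ 0 := by positivity
      field_simp
    have h5 : 2*ε^2 * (1/(((((a:ℕ):ℝ)+1))^2*((b:ℝ))^2))
        ≤ 2*ε^2 * (2/((m:ℝ)+1)^2*(1/((((a:ℕ):ℝ)+1))^2+1/((b:ℝ))^2)) :=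
      mul_le_mul_of_nonneg_left h3 (by positivity)
    calc (ε/(((a:ℕ):ℝ)+1)^2) * compSum (fun b => ε/((b:ℕ):ℝ)^2) b
        ≤ (ε/(((a:ℕ):ℝ)+1)^2) * (2*ε/((b:ℕ):ℝ)^2) := h2
      _ = 2*ε^2 * (1/(((((a:ℕ):ℝ)+1))^2*((b:ℝ))^2)) := h4
      _ ≤ 2*ε^2 * (2/((m:ℝ)+1)^2*(1/((((a:ℕ):ℝ)+1))^2+1/((b:ℝ))^2)) := h5
      _ = (4*ε^2/((m:ℝ)+1)^2) * (1/(((a:ℕ):ℝ)+1)^2 + 1/((b:ℝ))^2) := by ring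
  calc ∑ a : Fin m, (ε/(((a:ℕ):ℝ)+1)^2) * compSum (fun b => ε/((b:ℕ):ℝ)^2) (m - (a:ℕ))
      ≤ ∑ a : Fin m, (4*ε^2/((m:ℝ)+1)^2) * (1/(((a:ℕ):ℝ)+1)^2 + 1/(((m - (a:ℕ) : ℕ):ℝ))^2) :=
        Finset.sum_le_sum fun a _ => step a
    _ = (4*ε^2/((m:ℝ)+1)^2) * ((∑ a : Fin m, 1/(((a:ℕ):ℝ)+1)^2)
          + ∑ a : Fin m, 1/(((m - (a:ℕ) : ℕ):ℝ))^2) := by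
        rw [← Finset.mul_sum, Finset.sum_add_distrib]
    _ ≤ (4*ε^2/((m:ℝ)+1)^2) * (2 + 2) :=
        mul_le_mul_of_nonneg_left (add_le_add (sum_inv_sq m) (sum_inv_sq' m)) (by positivity)
    _ = 16*ε^2/((m:ℝ)+1)^2 := by ring

lemma compSum_bound (ε : ℝ) (hε : 0 ≤ ε) (hε16 : 16*ε ≤ 1) :
    ∀ n, 1 ≤ n → compSum (fun b => ε/((b:ℕ):ℝ)^2) n ≤ 2*ε/((n:ℕ):ℝ)^2 := by
  intro n
  induction n using Nat.strong_induction_on with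
  | _ n ih =>
    intro hn
    obtain ⟨m, rfl⟩ : ∃ m, n = m + 1 := ⟨n-1, by omega⟩
    rw [compSum_succ, Fin.sum_univ_castSucc]
    simp only [Fin.coe_castSucc, Fin.val_last, Nat.cast_add, Nat.cast_one, Nat.sub_self,
      compSum_zero, mul_one]
    have htail := tail_bound ε hε m (fun k hk1 hk2 => ih k (by omega) hk1)
    have hfin : 16*ε^2/((m:ℝ)+1)^2 + ε/((m:ℝ)+1)^2 ≤ 2*ε/(((m:ℝ))+1)^2 := by
      have h1 : 16*ε^2 ≤ ε := by nlinarith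
      have h2 : (0:ℝ) < ((m:ℝ)+1)^2 := by positivity
      rw [← add_div, div_le_div_iff₀ h2 h2]
      nlinarith
    calc _ ≤ 16*ε^2/((m:ℝ)+1)^2 + ε/((m:ℝ)+1)^2 := add_le_add htail le_rfl
      _ ≤ 2*ε/((m:ℝ)+1)^2 := hfin


lemma blocksFun_lt {r : ℕ} (c : Composition r) (hc : 2 ≤ c.length) (i : Fin c.length) :
    c.blocksFun i < r := by
  have hsum := c.sum_blocksFun
  obtain ⟨j, hj⟩ : ∃ j : Fin c.length, j ≠ i := by
    refine ⟨⟨if (i:ℕ) = 0 then 1 else 0, by split <;> omega⟩, ?_⟩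
    intro h
    apply_fun Fin.val at h
    dsimp at h
    split at h <;> omega
  have h2 : c.blocksFun i + c.blocksFun j ≤ ∑ k, c.blocksFun k := by
    calc c.blocksFun i + c.blocksFun j
        = ∑ k ∈ ({i, j} : Finset (Fin c.length)), c.blocksFun k := by
          rw [Finset.sum_pair (by exact fun h => hj h.symm)]
      _ ≤ ∑ k, c.blocksFun k :=
          Finset.sum_le_sum_of_subset (Finset.subset_univ _)
  have h3 := c.one_le_blocksFun j
  omega

/-- **Siegel–Sternberg estimate.** The sequence defined by `σ₁ = 1` and
`σ_r = d·Σ_{k=2}^r Σ_{r₁+⋯+r_k=r} σ_{r₁}⋯σ_{r_k}` (sum over ordered tuples of positive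
integers, i.e. compositions) grows at most exponentially. -/
theorem stmt18 (d : ℕ) (hd : 1 ≤ d) (σ : ℕ → ℝ) (hσ1 : σ 1 = 1)
    (hrec : ∀ r : ℕ, 2 ≤ r → σ r = d * ∑ comp : Composition r,
      (if 2 ≤ comp.length then ∏ i : Fin comp.length, σ (comp.blocksFun i) else 0)) :
    ∃ C : ℝ, 1 < C ∧ ∀ r : ℕ, 1 ≤ r → σ r ≤ C ^ r := by
  have hd1 : (1:ℝ) ≤ (d:ℝ) := by exact_mod_cast hd
  have hd0 : (d:ℝ) ≠ 0 := by linarith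
  set C : ℝ := 16*(d:ℝ) with hCdef
  have hC0 : (0:ℝ) < C := by rw [hCdef]; linarith
  have hC16 : (16:ℝ) ≤ C := by rw [hCdef]; linarith
  have hC1 : (1:ℝ) < C := by linarith
  set ε : ℝ := 1/C with hεdef
  have hε0 : 0 < ε := by rw [hεdef]; positivity
  have hεC : ε * C = 1 := by rw [hεdef]; field_simp
  have h16d : ε * (16*(d:ℝ)) = 1 := by rw [← hCdef]; exact hεC
  have hε16 : 16*ε ≤ 1 := by
    rw [hεdef, mul_one_div, div_le_one hC0]
    exact hC16
  have hε1 : ε ≤ 1 := by linarith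
  have hdε : (d:ℝ)*(16*ε^2) = ε := by linear_combination ε * h16d
  set w : ℕ → ℝ := fun b => ε/((b:ℕ):ℝ)^2 with hw
  clear_value w
  clear_value ε
  clear_value C
  have main : ∀ r, 1 ≤ r → 0 ≤ σ r ∧ σ r ≤ ε * C^r / ((r:ℕ):ℝ)^2 := by
    intro r
    induction r using Nat.strong_induction_on with
    | _ r ih =>
      intro hr1
      rcases eq_or_lt_of_le hr1 with h1 | h2
      · rw [← h1, hσ1]
        constructor
        · norm_num
        · simp only [Nat.cast_one, one_pow, pow_one]
          rw [div_one, hεC]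
      · have hr2 : 2 ≤ r := h2
        have h0r : 0 < r := by omega
        -- termwise bound
        have hterm : ∀ c : Composition r,
            (0 ≤ (if 2 ≤ c.length then ∏ i : Fin c.length, σ (c.blocksFun i) else 0)) ∧
            ((if 2 ≤ c.length then ∏ i : Fin c.length, σ (c.blocksFun i) else 0)
              ≤ (if 2 ≤ c.length then C^r * (c.blocks.map w).prod else 0)) := by
          intro c
          by_cases hc : 2 ≤ c.length
          · simp only [if_pos hc]
            have hIH : ∀ i : Fin c.length, 0 ≤ σ (c.blocksFun i) ∧
                σ (c.blocksFun i) ≤ ε * C^(c.blocksFun i) / ((c.blocksFun i : ℕ):ℝ)^2 :=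
              fun i => ih _ (blocksFun_lt c hc i) (c.one_le_blocksFun i)
            have hp1 : ∏ i : Fin c.length, σ (c.blocksFun i)
                ≤ ∏ i : Fin c.length, (ε * C^(c.blocksFun i) / ((c.blocksFun i : ℕ):ℝ)^2) :=
              Finset.prod_le_prod (fun i _ => (hIH i).1) (fun i _ => (hIH i).2)
            have hp0 : 0 ≤ ∏ i : Fin c.length, σ (c.blocksFun i) :=
              Finset.prod_nonneg (fun i _ => (hIH i).1)
            have hp2 : ∏ i : Fin c.length, (ε * C^(c.blocksFun i) / ((c.blocksFun i : ℕ):ℝ)^2)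
                = C^r * (c.blocks.map w).prod := by
              rw [← prod_blocksFun_eq w c]
              have heq : ∀ i : Fin c.length,
                  ε * C^(c.blocksFun i) / ((c.blocksFun i : ℕ):ℝ)^2
                    = C^(c.blocksFun i) * w (c.blocksFun i) := by
                intro i
                rw [hw]
                ring
              rw [Finset.prod_congr rfl (fun i _ => heq i), Finset.prod_mul_distrib,
                Finset.prod_pow_eq_pow_sum, c.sum_blocksFun]
            exact ⟨hp0, hp1.trans (le_of_eq hp2)⟩
          · simp [hc]
        -- sum bound
        have hS : ∑ c : Composition r,
            (if 2 ≤ c.length then ∏ i : Fin c.length, σ (c.blocksFun i) else 0)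
            ≤ C^r * ∑ c : Composition r,
                (if 2 ≤ c.length then (c.blocks.map w).prod else 0) := by
          calc ∑ c : Composition r,
              (if 2 ≤ c.length then ∏ i : Fin c.length, σ (c.blocksFun i) else 0)
              ≤ ∑ c : Composition r,
                (if 2 ≤ c.length then C^r * (c.blocks.map w).prod else 0) :=
                Finset.sum_le_sum fun c _ => (hterm c).2
            _ = C^r * ∑ c : Composition r,
                (if 2 ≤ c.length then (c.blocks.map w).prod else 0) := by
                rw [Finset.mul_sum]
                exact Finset.sum_congr rfl fun c _ => by
                  by_cases hc : 2 ≤ c.length <;> simp [hc]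
        -- split off the single composition
        have hsplit : ∑ c : Composition r,
            (if 2 ≤ c.length then (c.blocks.map w).prod else 0) = compSum w r - w r := by
          have h1 : compSum w r = ∑ c : Composition r,
              ((if 2 ≤ c.length then (c.blocks.map w).prod else 0)
                + (if ¬ 2 ≤ c.length then (c.blocks.map w).prod else 0)) := by
            rw [compSum]
            refine Finset.sum_congr rfl fun c _ => ?_
            by_cases hc : 2 ≤ c.length <;> simp [hc]
          rw [h1, Finset.sum_add_distrib]
          have h2 : ∑ c : Composition r,
              (if ¬ 2 ≤ c.length then (c.blocks.map w).prod else 0) = w r := by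
            rw [Finset.sum_eq_single (Composition.single r h0r)]
            · rw [if_pos]
              · rw [Composition.single_blocks]
                simp
              · rw [Composition.single_length]
                omega
            · intro c _ hne
              have hlen1 : c.length ≠ 1 := fun h =>
                hne ((Composition.eq_single_iff_length h0r).2 h)
              have hlenpos := Composition.length_pos_of_pos c h0r
              rw [if_neg]
              omega
            · intro h
              exact absurd (Finset.mem_univ _) h
          rw [h2]
          ring
        -- tail estimate
        obtain ⟨m, rfl⟩ : ∃ m, r = m + 1 := ⟨r-1, by omega⟩
        have htail := tail_bound ε hε0.le m
          (fun k hk1 hk2 => compSum_bound ε hε0.le hε16 k hk1)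
        have hcs : compSum w (m+1) - w (m+1) ≤ 16*ε^2/((m:ℝ)+1)^2 := by
          rw [compSum_succ, Fin.sum_univ_castSucc]
          simp only [Fin.coe_castSucc, Fin.val_last, Nat.sub_self, compSum_zero, mul_one]
          rw [← hw] at htail
          have hc2 : ∀ a : Fin m, w ((a:ℕ)+1) * compSum w (m - (a:ℕ))
              = (ε/(((a:ℕ):ℝ)+1)^2) * compSum w (m - (a:ℕ)) := by
            intro a
            simp only [hw]
            norm_cast
          rw [Finset.sum_congr rfl (fun a _ => hc2 a)]
          have : w (m+1) - w (m+1) = 0 := by ring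
          linarith [htail]
        -- assemble
        rw [hrec (m+1) hr2]
        constructor
        · exact mul_nonneg (Nat.cast_nonneg d)
            (Finset.sum_nonneg fun c _ => (hterm c).1)
        · have hfinal : (d:ℝ) * ∑ c : Composition (m+1),
              (if 2 ≤ c.length then ∏ i : Fin c.length, σ (c.blocksFun i) else 0)
              ≤ (d:ℝ) * (C^(m+1) * (16*ε^2/((m:ℝ)+1)^2)) := by
            apply mul_le_mul_of_nonneg_left _ (Nat.cast_nonneg d)
            calc ∑ c : Composition (m+1),
                (if 2 ≤ c.length then ∏ i : Fin c.length, σ (c.blocksFun i) else 0)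
                ≤ C^(m+1) * (compSum w (m+1) - w (m+1)) := by
                  rw [← hsplit]
                  exact hS
              _ ≤ C^(m+1) * (16*ε^2/((m:ℝ)+1)^2) :=
                  mul_le_mul_of_nonneg_left hcs (pow_nonneg hC0.le _)
          have heq2 : (d:ℝ) * (C^(m+1) * (16*ε^2/((m:ℝ)+1)^2))
              = ε * C^(m+1) / (((m+1:ℕ)):ℝ)^2 := by
            push_cast
            linear_combination (C^(m+1)/(((m:ℕ):ℝ)+1)^2) * hdε
          rw [← heq2]
          exact hfinal
  refine ⟨C, hC1, fun r hr => ?_⟩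
  have h := (main r hr).2
  have hr1 : (1:ℝ) ≤ ((r:ℕ):ℝ)^2 := by
    have : (1:ℝ) ≤ ((r:ℕ):ℝ) := by exact_mod_cast hr
    nlinarith
  have hCp : (0:ℝ) < C^r := pow_pos hC0 r
  have h2 : ε * C^r / ((r:ℕ):ℝ)^2 ≤ ε * C^r := by
    apply div_le_self (by positivity) hr1
  have h3 : ε * C^r ≤ 1 * C^r := mul_le_mul_of_nonneg_right hε1 hCp.le
  linarith
end
end

section
/- Let λ_1,…,λ_d∈ℂ∖{0} and let A⊆{α∈ℕ^d : |α|≥2}. Let i_0∈{1,…,d} be an index with |λ_{i_0}|=min_{1≤i≤d}|λ_i|, let n∈ℕ satisfy n−1≥2·min_{1≤i≤d}|λ_i|, and set θ:=min(min_{1≤i≤d}|λ_i|,1)/n. Let m≥1, j∈{1,…,d}, and let α,β∈A with β≤α componentwise, β≠α, and α−β+e_{i_0}∈A. If |λ^α−λ_j|<θ·ω_A(m) and |λ^β−λ_j|<θ·ω_A(m), then |α−β|≥m. -/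
open Complex Metric Set Filter Topology Asymptotics

noncomputable section

set_option maxHeartbeats 1000000 in
/-- **Siegel's small-divisor separation lemma.** If `α > β` in `A` (with
`α − β + e_{i₀} ∈ A`) both give small divisors below `θ·ω_A(m)` for the same index `j`
(the smallness hypotheses being vacuous for `m = 1`, by the convention `ω_A(1) = +∞`),
then `|α − β| ≥ m`. -/
theorem stmt19 (d : ℕ) (hd : 1 ≤ d) (lam : Fin d → ℂ) (hlam : ∀ i, lam i ≠ 0)
    (A : Set (Fin d → ℕ)) (hA : ∀ α ∈ A, 2 ≤ degree α)
    (i0 : Fin d) (hi0 : ∀ i, ‖lam i0‖ ≤ ‖lam i‖)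
    (n : ℕ) (hn : 2 * ‖lam i0‖ ≤ (n : ℝ) - 1)
    (θ : ℝ) (hθ : θ = min (‖lam i0‖) 1 / (n : ℝ))
    (m : ℕ) (hm : 1 ≤ m) (j : Fin d)
    (α β : Fin d → ℕ) (hαA : α ∈ A) (hβA : β ∈ A) (hle : β ≤ α) (hne : β ≠ α)
    (hshift : (fun i => α i - β i + if i = i0 then 1 else 0) ∈ A)
    (hsmallα : 2 ≤ m → ‖lampow lam α - lam j‖ < θ * omegaA lam A m)
    (hsmallβ : 2 ≤ m → ‖lampow lam β - lam j‖ < θ * omegaA lam A m) :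
    m ≤ ∑ i, (α i - β i) := by
  by_contra hcon
  push_neg at hcon
  have hpos : 0 < ∑ i, (α i - β i) := by
    obtain ⟨i, hi⟩ : ∃ i, β i ≠ α i := Function.ne_iff.mp hne
    exact Finset.sum_pos' (fun _ _ => Nat.zero_le _)
      ⟨i, Finset.mem_univ i, Nat.sub_pos_of_lt (lt_of_le_of_ne (hle i) hi)⟩
  have hm2 : 2 ≤ m := by omega
  set L := ‖lam i0‖ with hLdef
  have hLpos : 0 < L := norm_pos_iff.mpr (hlam i0)
  have hn1 : (1:ℝ) < (n:ℝ) := by nlinarith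
  have hn2 : (2:ℝ) ≤ (n:ℝ) := by
    have h1 : 1 < n := by exact_mod_cast hn1
    exact_mod_cast h1
  have hθpos : 0 < θ := by
    rw [hθ]; exact div_pos (lt_min hLpos one_pos) (by linarith)
  have hθn : θ * n = min L 1 := by rw [hθ]; field_simp
  have hminL : min L 1 ≤ L := min_le_left _ _
  have hmin1 : min L 1 ≤ 1 := min_le_right _ _
  -- basic facts about omegaA
  have hSbdd : BddBelow ({x | ∃ α ∈ A, 2 ≤ degree α ∧ degree α ≤ m ∧
      ∃ i, x = ‖lampow lam α - lam i‖} ∪ {1} : Set ℝ) := by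
    refine ⟨0, ?_⟩
    rintro x (⟨a, -, -, -, i, rfl⟩ | rfl)
    · exact norm_nonneg _
    · exact zero_le_one
  set ω := omegaA lam A m with hωdef
  have hω1 : ω ≤ 1 := by
    rw [hωdef, omegaA]
    exact csInf_le hSbdd (Or.inr rfl)
  have hdegγ : degree (fun i => α i - β i + if i = i0 then 1 else 0)
      = (∑ i, (α i - β i)) + 1 := by
    simp [degree, Finset.sum_add_distrib]
  have hωle : ω ≤ ‖lampow lam (fun i => α i - β i + if i = i0 then 1 else 0) - lam i0‖ := by
    rw [hωdef, omegaA]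
    exact csInf_le hSbdd (Or.inl ⟨_, hshift, hA _ hshift, by rw [hdegγ]; omega, i0, rfl⟩)
  -- factorizations
  set P : ℂ := ∏ i, lam i ^ (α i - β i) with hPdef
  have hfact : lampow lam α = lampow lam β * P := by
    rw [hPdef, lampow, lampow, ← Finset.prod_mul_distrib]
    refine Finset.prod_congr rfl fun i _ => ?_
    rw [← pow_add]
    congr 1
    exact (Nat.add_sub_cancel' (hle i)).symm
  have hγfact : lampow lam (fun i => α i - β i + if i = i0 then 1 else 0)
      = lam i0 * P := by
    rw [hPdef, lampow]
    simp only [pow_add, pow_ite, pow_one, pow_zero, Finset.prod_mul_distrib,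
      Finset.prod_ite_eq' Finset.univ i0 lam, Finset.mem_univ, if_true]
    ring
  set t : ℝ := ‖P - 1‖ with htdef
  have ht0 : 0 ≤ t := norm_nonneg _
  have h4 : ‖lampow lam (fun i => α i - β i + if i = i0 then 1 else 0) - lam i0‖ = L * t := by
    rw [hγfact, htdef, hLdef, ← norm_mul]
    congr 1; ring
  have h3 : ‖lampow lam α - lampow lam β‖
      = ‖lampow lam β‖ * t := by
    rw [hfact, htdef, ← norm_mul]
    congr 1; ring
  -- bounds
  have hsa := hsmallα hm2
  have hsb := hsmallβ hm2
  have hαβ : ‖lampow lam α - lampow lam β‖ < 2 * (θ * ω) := by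
    have h1 := norm_sub_le_norm_sub_add_norm_sub (lampow lam α) (lam j) (lampow lam β)
    have h2 : ‖lam j - lampow lam β‖
        = ‖lampow lam β - lam j‖ := norm_sub_rev _ _
    linarith
  have hβlow : L - θ * ω < ‖lampow lam β‖ := by
    have h1 := norm_sub_norm_le (lam j) (lampow lam β)
    have h2 : ‖lam j - lampow lam β‖
        = ‖lampow lam β - lam j‖ := norm_sub_rev _ _
    have h5 := hi0 j
    linarith
  have hωpos : 0 < ω := by
    have h1 : 0 < θ * ω := (norm_nonneg _).trans_lt hsa
    nlinarith
  have hLθpos : 0 < L - θ * ω := by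
    nlinarith [mul_le_mul_of_nonneg_left hω1 hθpos.le]
  -- key inequality
  have h5 : ω ≤ L * t := h4 ▸ hωle
  have h6 : (L - θ * ω) * t < 2 * (θ * ω) := by
    have h7 : ‖lampow lam β‖ * t < 2 * (θ * ω) := h3 ▸ hαβ
    nlinarith [mul_le_mul_of_nonneg_right hβlow.le ht0]
  have hkey : ω * (L - θ * ω) < 2 * (θ * ω) * L :=
    calc ω * (L - θ * ω) ≤ L * t * (L - θ * ω) :=
          mul_le_mul_of_nonneg_right h5 hLθpos.le
      _ = L * ((L - θ * ω) * t) := by ring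
      _ < L * (2 * (θ * ω)) := by
          exact mul_lt_mul_of_pos_left h6 hLpos
      _ = 2 * (θ * ω) * L := by ring
  -- final contradiction: θ * (2L + ω) ≤ L
  have hθb : θ * (2 * L + ω) ≤ L := by
    calc θ * (2 * L + ω) ≤ θ * (n : ℝ) := by
          apply mul_le_mul_of_nonneg_left _ hθpos.le
          linarith
      _ = min L 1 := hθn
      _ ≤ L := hminL
  nlinarith [mul_nonneg hωpos.le (sub_nonneg.mpr hθb)]
end
end
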